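/- The grafting product on n_T satisfies the pre-Lie identity: for all rooted trees T1, T2, T3 (and hence, by bilinearity, for all elements of n_T), (T1*T2)*T3 − T1*(T2*T3) = (T2*T1)*T3 − T2*(T1*T3). Consequently the Connes–Kreimer bracket [T1,T2] = T1*T2 − T2*T1 makes n_T a Lie algebra over ℚ. -/

import Mathlib

open scoped Classical

/-- Concrete (labeled) rooted trees: a root with a list of subtrees. -/
inductive RTree : Type
  | node : List RTree → RTree

/-- Shapes of admissible cuts: at each tree, either the full cut
(everything, including the root, goes to the pruned part `P`), or a choice of
an admissible cut of each child subtree.  A `full` occurring strictly inside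
corresponds to cutting the edge above that vertex. -/
inductive CutShape : Type
  | full
  | branch : List CutShape → CutShape

namespace CK

/-- Number of vertices of a forest. -/
def sizeL : List RTree → ℕ
  | [] => 0
  | .node l :: ts => 1 + sizeL l + sizeL ts

/-- All admissible cuts of a forest (a choice of admissible cut of each tree). -/
def cutsF : List RTree → List (List CutShape)
  | [] => [[]]
  | .node l :: ts =>
      (CutShape.full :: (cutsF l).map CutShape.branch).flatMap
        fun c => (cutsF ts).map (c :: ·)

/-- The root part `R_C(F)` of a cut. -/
def Rcut : List RTree → List CutShape → List RTree
  | [], _ => []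
  | _ :: _, [] => []
  | .node _ :: ts, .full :: cs => Rcut ts cs
  | .node l :: ts, .branch ds :: cs => RTree.node (Rcut l ds) :: Rcut ts cs

/-- The pruned part `P_C(F)` of a cut. -/
def Pcut : List RTree → List CutShape → List RTree
  | [], _ => []
  | _ :: _, [] => []
  | .node l :: ts, .full :: cs => RTree.node l :: Pcut ts cs
  | .node l :: ts, .branch ds :: cs => Pcut l ds ++ Pcut ts cs

/-- Number of `full`s occurring in a cut. -/
def fullsL : List CutShape → ℕ
  | [] => 0
  | .full :: cs => 1 + fullsL cs
  | .branch ds :: cs => fullsL ds + fullsL cs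

/-- A list of concrete forests containing (representatives of) every forest
with at most `n` vertices. -/
def forestsUpTo : ℕ → List (List RTree)
  | 0 => [[]]
  | n+1 => [] :: (forestsUpTo n).flatMap fun l => (forestsUpTo n).map fun F => RTree.node l :: F

/-- Isomorphism of rooted trees (non-planar): a root-preserving bijection, i.e.
the lists of subtrees agree up to permutation and isomorphism. -/
inductive Iso : RTree → RTree → Prop
  | node {l₁ l l₂ : List RTree} : List.Forall₂ Iso l₁ l → l.Perm l₂ → Iso (.node l₁) (.node l₂)

/-- Isomorphism classes of rooted trees. -/
abbrev TreeClass : Type := Quot Iso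

/-- Isomorphism classes of rooted forests = multisets of tree classes.
The empty forest is `0`. -/
abbrev ForestClass : Type := Multiset TreeClass

/-- Isomorphism class of a tree. -/
def clT (t : RTree) : TreeClass := Quot.mk _ t

/-- Isomorphism class of a forest. -/
def clF (F : List RTree) : ForestClass := (F.map clT : List TreeClass)

/-- A concrete representative of a forest class. -/
noncomputable def repF (M : ForestClass) : List RTree := M.toList.map Quot.out

/-- A concrete representative of a tree class. -/
noncomputable def repT (T : TreeClass) : RTree := T.out

/-- Number of vertices of a forest class. -/
noncomputable def sizeC (M : ForestClass) : ℕ := sizeL (repF M)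

/-- Number of vertices of a tree class. -/
noncomputable def sizeT (T : TreeClass) : ℕ := sizeL [repT T]

/-- The Hall algebra `H`: finitely supported ℚ-valued functions on
isomorphism classes of rooted forests, with basis the delta functions. -/
abbrev H : Type := ForestClass →₀ ℚ

/-- The basis element `δ_A` of `H`. -/
noncomputable def delta (A : ForestClass) : H := Finsupp.single A 1

/-- `n(A,B;M)`: the number of admissible cuts `C` of `M` with
`P_C(M) ≅ A` and `R_C(M) ≅ B`. -/
noncomputable def nCuts (A B M : ForestClass) : ℕ :=
  (cutsF (repF M)).countP fun c =>
    decide (clF (Pcut (repF M) c) = A ∧ clF (Rcut (repF M) c) = B)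

/-- A finite set of forest classes containing all classes with at most `n`
vertices. -/
noncomputable def forestCand (n : ℕ) : Finset ForestClass :=
  ((forestsUpTo n).map clF).toFinset

/-- A finite set of tree classes containing all classes with at most `n+1`
vertices. -/
noncomputable def treeCand (n : ℕ) : Finset TreeClass :=
  ((forestsUpTo n).map fun F => clT (RTree.node F)).toFinset

/-- The Hall product on basis elements: `δ_A × δ_B = Σ_M n(A,B;M)·δ_M`
(every `M` with `n(A,B;M) ≠ 0` has exactly `sizeC A + sizeC B` vertices). -/
noncomputable def mulBasis (A B : ForestClass) : H :=
  ∑ M ∈ forestCand (sizeC A + sizeC B), (nCuts A B M : ℚ) • delta M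

/-- The Hall product on `H`, extended bilinearly from basis elements. -/
noncomputable def hmul (f g : H) : H :=
  f.sum fun A a => g.sum fun B b => (a * b) • mulBasis A B

/-- The Connes-Kreimer Lie algebra `n_T` (as a vector space): the span of
isomorphism classes of rooted trees. -/
abbrev nT : Type := TreeClass →₀ ℚ

/-- The basis element of `n_T` corresponding to a rooted tree `T`. -/
noncomputable def tau (T : TreeClass) : nT := Finsupp.single T 1

/-- `a(T₁,T₂;T)`: the number of edges `e` of `T` such that the single-edge cut
at `e` has pruned part `≅ T₁` and root part `≅ T₂`. -/
noncomputable def aCount (T₁ T₂ T : TreeClass) : ℕ :=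
  (cutsF [repT T]).countP fun c =>
    decide (fullsL c = 1 ∧ clF (Pcut [repT T] c) = ({T₁} : Multiset TreeClass)
      ∧ clF (Rcut [repT T] c) = ({T₂} : Multiset TreeClass))

/-- The grafting (pre-Lie) product on basis elements:
`T₁ * T₂ = Σ_T a(T₁,T₂;T)·T`. -/
noncomputable def graftBasis (T₁ T₂ : TreeClass) : nT :=
  ∑ T ∈ treeCand (sizeT T₁ + sizeT T₂), (aCount T₁ T₂ T : ℚ) • tau T

/-- The grafting (pre-Lie) product on `n_T`, extended bilinearly. -/
noncomputable def graft (x y : nT) : nT :=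
  x.sum fun T₁ a => y.sum fun T₂ b => (a * b) • graftBasis T₁ T₂

/-- The Connes-Kreimer bracket `[x,y] = x*y - y*x` on `n_T`. -/
noncomputable def ckBracket (x y : nT) : nT := graft x y - graft y x

/-- `Ẽ_A δ_B = Σ_C δ_{R_C(B)}`, the sum over admissible cuts `C` of `B` with
`P_C(B) ≅ A`. -/
noncomputable def elimBasis (A B : ForestClass) : H :=
  (((cutsF (repF B)).filter fun c => decide (clF (Pcut (repF B) c) = A)).map
    fun c => delta (clF (Rcut (repF B) c))).sum

/-- The elimination operator `E_A` (here on `H ≅ H*`, identifying `φ_B` with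
`δ_B`). -/
noncomputable def elim (A : ForestClass) : H →ₗ[ℚ] H :=
  Finsupp.lsum ℚ fun B => LinearMap.toSpanSingleton ℚ H (elimBasis A B)

/-- `Ẽ^top_A δ_B = Σ_C δ_{P_C(B)}`, the sum over admissible cuts `C` of `B`
with `R_C(B) ≅ A`. -/
noncomputable def topElimBasis (A B : ForestClass) : H :=
  (((cutsF (repF B)).filter fun c => decide (clF (Rcut (repF B) c) = A)).map
    fun c => delta (clF (Pcut (repF B) c))).sum

/-- The top-elimination operator `E^top_A`. -/
noncomputable def topElim (A : ForestClass) : H →ₗ[ℚ] H :=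
  Finsupp.lsum ℚ fun B => LinearMap.toSpanSingleton ℚ H (topElimBasis A B)

/-- `H ⊗ H`, realized as finitely supported functions on pairs of classes. -/
abbrev H2 : Type := (ForestClass × ForestClass) →₀ ℚ

/-- `Δ(δ_M) = Σ δ_A ⊗ δ_B`, the sum over ordered pairs `(A,B)` of classes with
`A ⊔ B ≅ M`. -/
noncomputable def deltaBasis (M : ForestClass) : H2 :=
  ∑ A ∈ M.powerset.toFinset, Finsupp.single (A, M - A) 1

/-- The coproduct `Δ : H → H ⊗ H`. -/
noncomputable def coprod : H →ₗ[ℚ] H2 :=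
  Finsupp.lsum ℚ fun M => LinearMap.toSpanSingleton ℚ H2 (deltaBasis M)


/-! ### Part A: basic lemmas on cuts -/

section PartA

lemma sizeL_append : ∀ F G : List RTree, sizeL (F ++ G) = sizeL F + sizeL G
  | [], G => by simp [sizeL]
  | .node l :: ts, G => by
      simp only [List.cons_append, sizeL, sizeL_append ts G]; omega

lemma fullsL_append : ∀ a b : List CutShape, fullsL (a ++ b) = fullsL a + fullsL b
  | [], b => by simp [fullsL]
  | .full :: a, b => by simp only [List.cons_append, fullsL, fullsL_append a b]; omega
  | .branch ds :: a, b => by simp only [List.cons_append, fullsL, fullsL_append a b]; omega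

lemma cutsF_nil : cutsF [] = [[]] := by simp [cutsF]

lemma cutsF_cons (l : List RTree) (ts : List RTree) :
    cutsF (.node l :: ts) =
      (CutShape.full :: (cutsF l).map CutShape.branch).flatMap
        fun c => (cutsF ts).map (c :: ·) := by
  rw [cutsF]

lemma mem_cutsF_cons {l ts : List RTree} {c : List CutShape} :
    c ∈ cutsF (.node l :: ts) ↔
      (∃ cs ∈ cutsF ts, c = .full :: cs) ∨
      (∃ ds ∈ cutsF l, ∃ cs ∈ cutsF ts, c = .branch ds :: cs) := by
  simp only [cutsF_cons, List.mem_flatMap, List.mem_cons, List.mem_map]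
  constructor
  · rintro ⟨a, (rfl | ⟨ds, hds, rfl⟩), cs, hcs, rfl⟩
    · exact Or.inl ⟨cs, hcs, rfl⟩
    · exact Or.inr ⟨ds, hds, cs, hcs, rfl⟩
  · rintro (⟨cs, hcs, rfl⟩ | ⟨ds, hds, cs, hcs, rfl⟩)
    · exact ⟨.full, Or.inl rfl, cs, hcs, rfl⟩
    · exact ⟨.branch ds, Or.inr ⟨ds, hds, rfl⟩, cs, hcs, rfl⟩

lemma mem_cutsF_nil {c : List CutShape} : c ∈ cutsF [] ↔ c = [] := by
  simp [cutsF_nil]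

lemma length_of_mem_cutsF : ∀ {F : List RTree} {c : List CutShape}, c ∈ cutsF F →
    c.length = F.length
  | [], c, hc => by rw [mem_cutsF_nil.1 hc]; rfl
  | .node l :: ts, c, hc => by
      rcases mem_cutsF_cons.1 hc with ⟨cs, hcs, rfl⟩ | ⟨ds, _, cs, hcs, rfl⟩ <;>
        simp [length_of_mem_cutsF hcs]

lemma cutsF_append : ∀ F G : List RTree,
    cutsF (F ++ G) = (cutsF F).flatMap fun a => (cutsF G).map (a ++ ·)
  | [], G => by simp [cutsF_nil]
  | .node l :: ts, G => by
      simp only [List.cons_append, cutsF_cons, cutsF_append ts G]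
      simp only [List.flatMap_assoc, List.map_flatMap, List.flatMap_map, List.map_map,
        Function.comp_def, List.cons_append]

lemma Pcut_nil_nil : Pcut [] [] = [] := by simp [Pcut]
lemma Rcut_nil_nil : Rcut [] [] = [] := by simp [Rcut]
lemma Pcut_full (l ts cs) :
    Pcut (.node l :: ts) (.full :: cs) = RTree.node l :: Pcut ts cs := by simp [Pcut]
lemma Pcut_branch (l ts ds cs) :
    Pcut (.node l :: ts) (.branch ds :: cs) = Pcut l ds ++ Pcut ts cs := by simp [Pcut]
lemma Rcut_full (l ts cs) : Rcut (.node l :: ts) (.full :: cs) = Rcut ts cs := by simp [Rcut]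
lemma Rcut_branch (l ts ds cs) :
    Rcut (.node l :: ts) (.branch ds :: cs) = RTree.node (Rcut l ds) :: Rcut ts cs := by
  simp [Rcut]

lemma Pcut_append : ∀ (F G : List RTree) (a b : List CutShape), a.length = F.length →
    Pcut (F ++ G) (a ++ b) = Pcut F a ++ Pcut G b
  | [], G, a, b, h => by
      rw [List.length_eq_zero_iff.1 h]; simp [Pcut_nil_nil]
  | .node l :: ts, G, a, b, h => by
      match a with
      | [] => simp at h
      | .full :: a' =>
          simp only [List.cons_append, Pcut_full, Pcut_append ts G a' b (by simpa using h)]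
      | .branch ds :: a' =>
          simp only [List.cons_append, Pcut_branch, Pcut_append ts G a' b (by simpa using h),
            List.append_assoc]

lemma Rcut_append : ∀ (F G : List RTree) (a b : List CutShape), a.length = F.length →
    Rcut (F ++ G) (a ++ b) = Rcut F a ++ Rcut G b
  | [], G, a, b, h => by
      rw [List.length_eq_zero_iff.1 h]; simp [Rcut_nil_nil]
  | .node l :: ts, G, a, b, h => by
      match a with
      | [] => simp at h
      | .full :: a' =>
          simp only [List.cons_append, Rcut_full, Rcut_append ts G a' b (by simpa using h)]
      | .branch ds :: a' =>
          simp only [List.cons_append, Rcut_branch, Rcut_append ts G a' b (by simpa using h)]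

lemma length_Pcut : ∀ {F : List RTree} {c : List CutShape}, c ∈ cutsF F →
    (Pcut F c).length = fullsL c
  | [], c, hc => by rw [mem_cutsF_nil.1 hc]; simp [Pcut_nil_nil, fullsL]
  | .node l :: ts, c, hc => by
      rcases mem_cutsF_cons.1 hc with ⟨cs, hcs, rfl⟩ | ⟨ds, hds, cs, hcs, rfl⟩
      · simp only [Pcut_full, fullsL, List.length_cons, length_Pcut hcs]; omega
      · simp only [Pcut_branch, fullsL, List.length_append, length_Pcut hcs, length_Pcut hds]

lemma length_le_Rcut_add : ∀ {F : List RTree} {c : List CutShape}, c ∈ cutsF F →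
    F.length ≤ (Rcut F c).length + fullsL c
  | [], c, hc => by rw [mem_cutsF_nil.1 hc]; simp
  | .node l :: ts, c, hc => by
      rcases mem_cutsF_cons.1 hc with ⟨cs, hcs, rfl⟩ | ⟨ds, hds, cs, hcs, rfl⟩
      · have := length_le_Rcut_add hcs
        simp only [Rcut_full, fullsL, List.length_cons]; omega
      · have := length_le_Rcut_add hcs
        simp only [Rcut_branch, fullsL, List.length_cons]; omega

lemma zeroCut : ∀ {F : List RTree} {c : List CutShape}, c ∈ cutsF F → fullsL c = 0 →
    Pcut F c = [] ∧ Rcut F c = F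
  | [], c, hc, _ => by rw [mem_cutsF_nil.1 hc]; exact ⟨Pcut_nil_nil, Rcut_nil_nil⟩
  | .node l :: ts, c, hc, h0 => by
      rcases mem_cutsF_cons.1 hc with ⟨cs, hcs, rfl⟩ | ⟨ds, hds, cs, hcs, rfl⟩
      · simp [fullsL] at h0
      · simp only [fullsL] at h0
        obtain ⟨h1, h2⟩ := zeroCut hds (by omega)
        obtain ⟨h3, h4⟩ := zeroCut hcs (by omega)
        simp [Pcut_branch, Rcut_branch, h1, h2, h3, h4]

lemma sizeL_Pcut_add_Rcut : ∀ {F : List RTree} {c : List CutShape}, c ∈ cutsF F →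
    sizeL (Pcut F c) + sizeL (Rcut F c) = sizeL F
  | [], c, hc => by rw [mem_cutsF_nil.1 hc]; simp [Pcut_nil_nil, Rcut_nil_nil, sizeL]
  | .node l :: ts, c, hc => by
      rcases mem_cutsF_cons.1 hc with ⟨cs, hcs, rfl⟩ | ⟨ds, hds, cs, hcs, rfl⟩
      · have := sizeL_Pcut_add_Rcut hcs
        simp only [Pcut_full, Rcut_full, sizeL]; omega
      · have h1 := sizeL_Pcut_add_Rcut hcs
        have h2 := sizeL_Pcut_add_Rcut hds
        simp only [Pcut_branch, Rcut_branch, sizeL, sizeL_append]; omega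

lemma countP_flatMap {α β : Type} (l : List α) (f : α → List β) (p : β → Bool) :
    (l.flatMap f).countP p = (l.map fun a => (f a).countP p).sum := by
  induction l with
  | nil => rfl
  | cons a l ih => simp [List.flatMap_cons, List.countP_append, ih]

lemma sum_map_ite {α : Type} (L : List α) (q : α → Prop) [DecidablePred q] :
    (L.map fun a => if q a then 1 else 0).sum = L.countP fun a => decide (q a) := by
  induction L with
  | nil => rfl
  | cons a L ih => by_cases h : q a <;> simp [List.countP_cons, h, ih, Nat.add_comm]

lemma fullsL_cons (x : CutShape) (cs : List CutShape) :
    fullsL (x :: cs) = fullsL [x] + fullsL cs := by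
  have := fullsL_append [x] cs; simpa using this

lemma cnt0 : ∀ F : List RTree, (cutsF F).countP (fun c => decide (fullsL c = 0)) = 1
  | [] => by simp [cutsF_nil, List.countP_cons, fullsL]
  | .node l :: ts => by
      have key : ∀ x : CutShape,
          ((cutsF ts).map (x :: ·)).countP (fun c => decide (fullsL c = 0))
            = if fullsL [x] = 0 then 1 else 0 := by
        intro x
        rw [List.countP_map]
        by_cases h : fullsL [x] = 0
        · simp only [h, if_true]
          rw [List.countP_congr (q := fun cs => decide (fullsL cs = 0))
            (fun cs _ => by simp [Function.comp, fullsL_cons x cs, h])]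
          exact cnt0 ts
        · simp only [h, if_false]
          apply List.countP_eq_zero.2; intro cs _
          simp only [Function.comp_apply, decide_eq_true_eq, fullsL_cons x cs]
          omega
      rw [cutsF_cons, countP_flatMap, List.map_cons, List.sum_cons, List.map_map,
        key CutShape.full,
        List.map_congr_left (g := fun ds => if fullsL ds = 0 then 1 else 0)
          (fun ds _ => by rw [Function.comp_apply, key (CutShape.branch ds)]; simp [fullsL]),
        sum_map_ite, cnt0 l]
      simp [fullsL]

end PartA

/-! ### Part B: isomorphism class lemmas -/

section PartB

lemma clF_nil : clF [] = 0 := rfl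

lemma clF_cons (t : RTree) (ts : List RTree) : clF (t :: ts) = clT t ::ₘ clF ts := by
  simp [clF]

lemma clF_append (F G : List RTree) : clF (F ++ G) = clF F + clF G := by
  simp [clF]

lemma clF_singleton (t : RTree) : clF [t] = {clT t} := by simp [clF]

lemma card_clF (F : List RTree) : Multiset.card (clF F) = F.length := by simp [clF]

lemma glift {β : Sort*} (g : RTree → β) (h : ∀ a b, Iso a b → g a = g b) {a b : RTree}
    (hab : clT a = clT b) : g a = g b := by
  have : Quot.lift g h (clT a) = Quot.lift g h (clT b) := by rw [hab]
  exact this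

lemma sizeL_cons' (t : RTree) (ts : List RTree) : sizeL (t :: ts) = sizeL [t] + sizeL ts := by
  cases t with
  | node l => simp only [sizeL]; omega

lemma sizeL_mem {t : RTree} : ∀ {F : List RTree}, t ∈ F → sizeL [t] ≤ sizeL F := by
  intro F
  induction F with
  | nil => intro h; simp at h
  | cons a F ih =>
      intro h
      have hc := sizeL_cons' a F
      rcases List.mem_cons.1 h with rfl | h
      · omega
      · have := ih h; omega

lemma isoRefl : ∀ t : RTree, Iso t t
  | .node l =>
      Iso.node (List.forall₂_same.2 fun x hx => isoRefl x) (List.Perm.refl l)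
termination_by t => sizeL [t]
decreasing_by
  have := sizeL_mem hx
  simp only [sizeL]; omega

lemma forall₂_iso_refl (F : List RTree) : List.Forall₂ Iso F F :=
  List.forall₂_same.2 fun x _ => isoRefl x

lemma clT_node_perm {F G : List RTree} (h : F.Perm G) : clT (.node F) = clT (.node G) :=
  Quot.sound (Iso.node (forall₂_iso_refl F) h)

lemma clT_node_cons_congr {a b : RTree} (h : clT a = clT b) (pre post : List RTree) :
    clT (.node (pre ++ a :: post)) = clT (.node (pre ++ b :: post)) := by
  refine glift (fun x => clT (.node (pre ++ x :: post))) (fun x y hxy => ?_) h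
  exact Quot.sound (Iso.node
    (List.rel_append (forall₂_iso_refl pre)
      (List.Forall₂.cons hxy (forall₂_iso_refl post))) (List.Perm.refl _))

lemma clT_node_forall₂ : ∀ {F G : List RTree},
    List.Forall₂ (fun a b => clT a = clT b) F G →
    ∀ pre : List RTree, clT (.node (pre ++ F)) = clT (.node (pre ++ G))
  | _, _, List.Forall₂.nil, pre => rfl
  | _, _, @List.Forall₂.cons _ _ _ a b F G hab h, pre => by
      have h1 := clT_node_cons_congr hab pre F
      have h2 := clT_node_forall₂ h (pre ++ [b])
      simp only [List.append_assoc, List.singleton_append] at h2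
      exact h1.trans h2

lemma perm_map_decomp {α β : Type*} (f : α → β) :
    ∀ (l' l : List α), (l.map f).Perm (l'.map f) →
      ∃ l'', l.Perm l'' ∧ List.Forall₂ (fun a b => f a = f b) l'' l' := by
  intro l'
  induction l' with
  | nil =>
      intro l h
      have hnil : l.map f = [] := List.Perm.eq_nil (by simpa using h)
      have hl : l = [] := List.map_eq_nil_iff.1 hnil
      subst hl
      exact ⟨[], List.Perm.refl [], List.Forall₂.nil⟩
  | cons b l'₂ ih =>
      intro l h
      have hmem : f b ∈ l.map f := h.mem_iff.2 (by simp)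
      obtain ⟨a, ha, hfa⟩ := List.mem_map.1 hmem
      obtain ⟨u, v, rfl⟩ := List.append_of_mem ha
      have hperm1 : ((u ++ a :: v).map f).Perm (f a :: (u ++ v).map f) := by
        simp only [List.map_append, List.map_cons]
        exact List.perm_middle
      have h2 : (f a :: (u ++ v).map f).Perm (f b :: l'₂.map f) := by
        refine hperm1.symm.trans ?_
        simpa using h
      rw [hfa] at h2
      have h3 := h2.cons_inv
      obtain ⟨l'', hp, hf⟩ := ih (u ++ v) h3
      exact ⟨a :: l'', (List.perm_middle.trans (hp.cons a)),
        List.Forall₂.cons hfa hf⟩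

lemma clF_eq_iff {F G : List RTree} : clF F = clF G ↔ (F.map clT).Perm (G.map clT) := by
  simp [clF, Multiset.coe_eq_coe]

lemma clT_node_congr {F G : List RTree} (h : clF F = clF G) :
    clT (.node F) = clT (.node G) := by
  obtain ⟨F'', hp, hf⟩ := perm_map_decomp clT G F (clF_eq_iff.1 h)
  exact (clT_node_perm hp).trans (by simpa using clT_node_forall₂ hf [])

lemma clT_repT (T : TreeClass) : clT (repT T) = T := Quot.out_eq T

lemma clF_repF (M : ForestClass) : clF (repF M) = M := by
  simp only [clF, repF, List.map_map]
  have : (List.map (clT ∘ Quot.out) M.toList) = M.toList.map id := by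
    apply List.map_congr_left; intro a _; exact Quot.out_eq a
  rw [this, List.map_id, Multiset.coe_toList]

lemma clF_repT_single (T : TreeClass) : clF [repT T] = {T} := by
  rw [clF_singleton, clT_repT]

lemma clF_eq_single {F : List RTree} {T : TreeClass} (h : clF F = {T}) :
    ∃ r, F = [r] ∧ clT r = T := by
  have hlen : F.length = 1 := by
    have := card_clF F; rw [h] at this; simpa using this.symm
  obtain ⟨r, rfl⟩ := List.length_eq_one_iff.1 hlen
  refine ⟨r, rfl, ?_⟩
  have := clF_singleton r ▸ h
  exact Multiset.singleton_inj.1 (by rwa [clF_singleton] at h)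

end PartB

/-! ### Part C: cut statistics and isomorphism invariance -/

section PartC

lemma sizeL_perm : ∀ {F G : List RTree}, F.Perm G → sizeL F = sizeL G := by
  intro F G h
  induction h with
  | nil => rfl
  | @cons x l₁ l₂ _ ih =>
      have h1 := sizeL_cons' x l₁
      have h2 := sizeL_cons' x l₂
      omega
  | swap x y l =>
      have h1 := sizeL_cons' y (x :: l)
      have h2 := sizeL_cons' x l
      have h3 := sizeL_cons' x (y :: l)
      have h4 := sizeL_cons' y l
      omega
  | trans _ _ ih1 ih2 => omega

/-- statistics of a cut: (class of pruned part, class of root part, number of fulls) -/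
noncomputable def stat3 (F : List RTree) (c : List CutShape) :
    ForestClass × ForestClass × ℕ :=
  (clF (Pcut F c), clF (Rcut F c), fullsL c)

noncomputable def cutStats (F : List RTree) : Multiset (ForestClass × ForestClass × ℕ) :=
  Multiset.map (stat3 F) ((cutsF F : List (List CutShape)) : Multiset (List CutShape))

noncomputable def add3 (a b : ForestClass × ForestClass × ℕ) : ForestClass × ForestClass × ℕ :=
  (a.1 + b.1, a.2.1 + b.2.1, a.2.2 + b.2.2)

noncomputable def conv3 (m₁ m₂ : Multiset (ForestClass × ForestClass × ℕ)) :
    Multiset (ForestClass × ForestClass × ℕ) :=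
  m₁.bind fun a => m₂.map fun b => add3 a b

lemma stat3_append {F G : List RTree} {a b : List CutShape} (ha : a ∈ cutsF F) :
    stat3 (F ++ G) (a ++ b) = add3 (stat3 F a) (stat3 G b) := by
  simp [stat3, add3, Pcut_append F G a b (length_of_mem_cutsF ha),
    Rcut_append F G a b (length_of_mem_cutsF ha), clF_append, fullsL_append]

lemma coe_flatMap {α β : Type*} (l : List α) (f : α → List β) :
    ((l.flatMap f : List β) : Multiset β) = (l : Multiset α).bind fun a => (f a : Multiset β) := by
  induction l with
  | nil => simp
  | cons a l ih => simp [List.flatMap_cons, ← ih]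

lemma cutStats_append (F G : List RTree) :
    cutStats (F ++ G) = conv3 (cutStats F) (cutStats G) := by
  unfold cutStats conv3
  rw [cutsF_append, coe_flatMap, Multiset.map_bind, Multiset.bind_map]

  apply Multiset.bind_congr
  intro a ha
  rw [← Multiset.map_coe, Multiset.map_map, Multiset.map_map]
  apply Multiset.map_congr rfl
  intro b _
  exact stat3_append (Multiset.mem_coe.1 ha)

lemma cutStats_cons (t : RTree) (ts : List RTree) :
    cutStats (t :: ts) = conv3 (cutStats [t]) (cutStats ts) := by
  have := cutStats_append [t] ts
  simpa using this

lemma add3_left_comm (a b x : ForestClass × ForestClass × ℕ) :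
    add3 a (add3 b x) = add3 b (add3 a x) := by
  simp only [add3, Prod.mk.injEq]
  exact ⟨add_left_comm _ _ _, add_left_comm _ _ _, by omega⟩

lemma conv3_left_swap (m₁ m₂ m₃ : Multiset (ForestClass × ForestClass × ℕ)) :
    conv3 m₁ (conv3 m₂ m₃) = conv3 m₂ (conv3 m₁ m₃) := by
  unfold conv3
  simp only [Multiset.map_bind, Multiset.map_map]
  rw [Multiset.bind_bind]
  apply Multiset.bind_congr; intro b _
  apply Multiset.bind_congr; intro a _
  apply Multiset.map_congr rfl; intro x _
  exact add3_left_comm a b x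

lemma cutStats_perm : ∀ {F G : List RTree}, F.Perm G → cutStats F = cutStats G := by
  intro F G h
  induction h with
  | nil => rfl
  | @cons x l₁ l₂ _ ih => rw [cutStats_cons x l₁, cutStats_cons x l₂, ih]
  | swap x y l =>
      rw [cutStats_cons y (x :: l), cutStats_cons x l, cutStats_cons x (y :: l),
        cutStats_cons y l, conv3_left_swap]
  | trans _ _ ih1 ih2 => rw [ih1, ih2]

/-- wrapping a forest class into the class of a tree with that forest of children -/
noncomputable def nodeCl (M : ForestClass) : TreeClass := clT (.node (repF M))

lemma nodeCl_clF (F : List RTree) : nodeCl (clF F) = clT (.node F) :=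
  clT_node_congr (clF_repF (clF F))

lemma flatMap_map_single {α β : Type*} (L : List α) (g : α → β) :
    (L.flatMap fun a => [g a]) = L.map g := by
  induction L with
  | nil => rfl
  | cons a L ih => simp [List.flatMap_cons, ih]

lemma cutsF_single (l : List RTree) :
    cutsF [RTree.node l] = (CutShape.full :: (cutsF l).map CutShape.branch).map (fun c => [c]) := by
  rw [cutsF_cons, cutsF_nil, ← flatMap_map_single (g := fun c => [c])]
  rfl

lemma stat3_node_full (l : List RTree) :
    stat3 [RTree.node l] [CutShape.full] = ({clT (.node l)}, 0, 1) := by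
  have h1 := Pcut_full l [] []
  have h2 := Rcut_full l [] []
  simp [stat3, h1, h2, Pcut_nil_nil, Rcut_nil_nil, clF_singleton, clF_nil, fullsL]

lemma stat3_node_branch (l : List RTree) (ds : List CutShape) :
    stat3 [RTree.node l] [CutShape.branch ds]
      = (clF (Pcut l ds), ({clT (.node (Rcut l ds))} : Multiset TreeClass), fullsL ds) := by
  have h1 := Pcut_branch l [] ds []
  have h2 := Rcut_branch l [] ds []
  simp [stat3, h1, h2, Pcut_nil_nil, Rcut_nil_nil, clF_singleton, clF_cons, clF_nil, fullsL]

lemma cutStats_single (l : List RTree) :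
    cutStats [RTree.node l] = ({clT (.node l)}, (0 : ForestClass), 1) ::ₘ
      (cutStats l).map (fun s => (s.1, ({nodeCl s.2.1} : Multiset TreeClass), s.2.2)) := by
  unfold cutStats
  rw [cutsF_single, ← Multiset.map_coe, Multiset.map_map, ← Multiset.cons_coe,
    ← Multiset.map_coe, Multiset.map_cons, Multiset.map_map, Multiset.map_map]
  congr 1
  · exact stat3_node_full l
  · apply Multiset.map_congr rfl
    intro ds _
    simp only [Function.comp_apply, stat3_node_branch]
    rw [show (stat3 l ds).1 = clF (Pcut l ds) from rfl,
      show (stat3 l ds).2.1 = clF (Rcut l ds) from rfl,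
      show (stat3 l ds).2.2 = fullsL ds from rfl, nodeCl_clF]

def childrenF : RTree → List RTree
  | .node l => l

lemma forall₂_iso_clF : ∀ {l₁ l : List RTree}, List.Forall₂ Iso l₁ l → clF l₁ = clF l
  | _, _, List.Forall₂.nil => rfl
  | _, _, @List.Forall₂.cons _ _ _ a b _ _ hab h => by
      have h1 : clT a = clT b := Quot.sound hab
      rw [clF_cons, clF_cons, forall₂_iso_clF h, h1]

lemma clF_childrenF_congr {a b : RTree} (h : clT a = clT b) :
    clF (childrenF a) = clF (childrenF b) := by
  refine glift (fun x => clF (childrenF x)) (fun x y hxy => ?_) h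
  cases hxy with
  | node h1 h2 =>
      simp only [childrenF]
      exact (forall₂_iso_clF h1).trans (clF_eq_iff.2 (h2.map clT))

lemma cutStats_congr_aux : ∀ (n : ℕ) {F G : List RTree}, sizeL F ≤ n → clF F = clF G →
    cutStats F = cutStats G := by
  intro n
  induction n with
  | zero =>
      intro F G h0 h
      have hF : F = [] := by
        cases F with
        | nil => rfl
        | cons t ts => cases t with | node l => simp [sizeL] at h0
      subst hF
      have hG : G = [] := by
        have hc := card_clF G
        rw [← h] at hc
        simp only [clF_nil, Multiset.card_zero] at hc
        exact List.length_eq_zero_iff.1 hc.symm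
      subst hG; rfl
  | succ n IH =>
      intro F G hsz h
      obtain ⟨F'', hp, hf⟩ := perm_map_decomp clT G F (clF_eq_iff.1 h)
      rw [cutStats_perm hp]
      have hsz'' : sizeL F'' ≤ n + 1 := by rw [← sizeL_perm hp]; exact hsz
      clear hp h hsz
      induction hf with
      | nil => rfl
      | @cons a b F₀ G₀ hab htail ihtail =>
          cases a with
          | node la =>
            cases b with
            | node lb =>
              have hab' : clT (RTree.node la) = clT (RTree.node lb) := hab
              have hch : clF la = clF lb := by
                simpa [childrenF] using clF_childrenF_congr hab'
              have hszx := sizeL_cons' (RTree.node la) F₀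
              have h5 : sizeL [RTree.node la] = 1 + sizeL la + sizeL [] := by
                simp [sizeL]
              have hla : sizeL la ≤ n := by omega
              rw [cutStats_cons (RTree.node la) F₀, cutStats_cons (RTree.node lb) G₀,
                cutStats_single la, cutStats_single lb, IH hla hch, hab',
                ihtail (by omega)]

lemma cutStats_congr {F G : List RTree} (h : clF F = clF G) : cutStats F = cutStats G :=
  cutStats_congr_aux (sizeL F) le_rfl h

lemma sum_map_ite2 {α : Type*} (L : List α) (p q : α → Prop) [DecidablePred p] [DecidablePred q]
    (v : ℕ) (hpq : ∀ a, ¬(p a ∧ q a)) :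
    (L.map fun a => if p a then 1 else if q a then v else 0).sum
      = L.countP (fun a => decide (p a)) + (L.countP fun a => decide (q a)) * v := by
  induction L with
  | nil => simp
  | cons a L ih =>
      by_cases hp : p a
      · have hq : ¬ q a := fun hq => hpq a ⟨hp, hq⟩
        simp [List.countP_cons, hp, hq, ih]; ring
      · by_cases hq : q a
        · simp [List.countP_cons, hp, hq, ih]; ring
        · simp [List.countP_cons, hp, hq, ih]

lemma cnt1 : ∀ F : List RTree, (cutsF F).countP (fun c => decide (fullsL c = 1)) = sizeL F
  | [] => by simp [cutsF_nil, fullsL, sizeL]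
  | .node l :: ts => by
      have key : ∀ x : CutShape,
          ((cutsF ts).map (x :: ·)).countP (fun c => decide (fullsL c = 1))
            = if fullsL [x] = 1 then 1 else if fullsL [x] = 0 then sizeL ts else 0 := by
        intro x
        rw [List.countP_map]
        by_cases h1 : fullsL [x] = 1
        · simp only [h1, if_true]
          rw [List.countP_congr (q := fun cs => decide (fullsL cs = 0)) (fun cs _ => by
            have hx := fullsL_cons x cs
            simp only [Function.comp_apply, decide_eq_true_eq]
            omega)]
          exact cnt0 ts
        · by_cases h0 : fullsL [x] = 0
          · simp only [h1, h0, if_false, if_true]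
            rw [List.countP_congr (q := fun cs => decide (fullsL cs = 1)) (fun cs _ => by
              have hx := fullsL_cons x cs
              simp only [Function.comp_apply, decide_eq_true_eq]
              omega)]
            exact cnt1 ts
          · simp only [h1, h0, if_false]
            apply List.countP_eq_zero.2; intro cs _
            simp only [Function.comp_apply, decide_eq_true_eq, fullsL_cons x cs]
            omega
      rw [cutsF_cons, countP_flatMap, List.map_cons, List.sum_cons, List.map_map,
        key CutShape.full,
        List.map_congr_left (g := fun ds => if fullsL ds = 1 then 1
            else if fullsL ds = 0 then sizeL ts else 0)
          (fun ds _ => by rw [Function.comp_apply, key (CutShape.branch ds)]; simp [fullsL]),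
        sum_map_ite2 _ _ _ _ (fun a => by omega), cnt1 l, cnt0 l]
      have hf : fullsL [CutShape.full] = 1 := by simp [fullsL]
      rw [hf, if_pos rfl]
      have hs : sizeL (RTree.node l :: ts) = 1 + sizeL l + sizeL ts := by simp [sizeL]
      omega

lemma countP_fulls_cutStats (F : List RTree) (k : ℕ) :
    Multiset.countP (fun s : ForestClass × ForestClass × ℕ => s.2.2 = k) (cutStats F)
      = (cutsF F).countP (fun c => decide (fullsL c = k)) := by
  unfold cutStats
  rw [Multiset.countP_map, ← Multiset.countP_eq_card_filter, Multiset.coe_countP]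
  apply List.countP_congr; intro c _
  rfl

lemma sizeL_congr {F G : List RTree} (h : clF F = clF G) : sizeL F = sizeL G := by
  rw [← cnt1 F, ← cnt1 G, ← countP_fulls_cutStats F 1, ← countP_fulls_cutStats G 1,
    cutStats_congr h]

lemma sizeL_of_clF_single {F : List RTree} {T : TreeClass} (h : clF F = {T}) :
    sizeL F = sizeT T :=
  sizeL_congr (by rw [h, clF_repT_single])

lemma forestsUpTo_complete : ∀ (n : ℕ) (F : List RTree), sizeL F ≤ n →
    ∃ F' ∈ forestsUpTo n, clF F' = clF F := by
  intro n
  induction n with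
  | zero =>
      intro F h
      have hF : F = [] := by
        cases F with
        | nil => rfl
        | cons t ts => cases t with | node l => simp [sizeL] at h
      exact ⟨[], by simp [forestsUpTo], by rw [hF]⟩
  | succ n IH =>
      intro F h
      cases F with
      | nil => exact ⟨[], by simp [forestsUpTo], rfl⟩
      | cons t ts =>
          cases t with
          | node l =>
              have hsl : sizeL l ≤ n := by simp only [sizeL] at h; omega
              have hsts : sizeL ts ≤ n := by simp only [sizeL] at h; omega
              obtain ⟨l', hl'mem, hl'⟩ := IH l hsl
              obtain ⟨ts', hts'mem, hts'⟩ := IH ts hsts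
              refine ⟨RTree.node l' :: ts', ?_, ?_⟩
              · show _ ∈ forestsUpTo (n+1)
                rw [forestsUpTo]
                refine List.mem_cons.2 (Or.inr (List.mem_flatMap.2 ⟨l', hl'mem, ?_⟩))
                exact List.mem_map.2 ⟨ts', hts'mem, rfl⟩
              · rw [clF_cons, clF_cons, hts', clT_node_congr hl']

lemma treeCand_complete {T : TreeClass} {n : ℕ} (h : sizeT T ≤ n + 1) : T ∈ treeCand n := by
  obtain ⟨l, hl⟩ : ∃ l, repT T = RTree.node l := by
    cases hrt : repT T with
    | node l => exact ⟨l, rfl⟩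
  have hsz : sizeL l ≤ n := by
    have h1 : sizeT T = sizeL [RTree.node l] := by unfold sizeT; rw [hl]
    have h2 : sizeL [RTree.node l] = 1 + sizeL l + sizeL [] := by simp [sizeL]
    have h3 : sizeL ([] : List RTree) = 0 := by simp [sizeL]
    omega
  obtain ⟨F', hF'mem, hF'⟩ := forestsUpTo_complete n l hsz
  have : clT (RTree.node F') = T := by
    rw [clT_node_congr hF', ← hl, clT_repT]
  unfold treeCand
  rw [List.mem_toFinset]
  exact List.mem_map.2 ⟨F', hF'mem, this⟩

end PartC

/-! ### Part D: the master lemma (coassociativity-style bijection) -/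

section PartD

noncomputable def add5 (a b : ForestClass × ForestClass × ForestClass × ℕ × ℕ) :
    ForestClass × ForestClass × ForestClass × ℕ × ℕ :=
  (a.1 + b.1, a.2.1 + b.2.1, a.2.2.1 + b.2.2.1, a.2.2.2.1 + b.2.2.2.1, a.2.2.2.2 + b.2.2.2.2)

noncomputable def conv5 (m₁ m₂ : Multiset (ForestClass × ForestClass × ForestClass × ℕ × ℕ)) :
    Multiset (ForestClass × ForestClass × ForestClass × ℕ × ℕ) :=
  m₁.bind fun a => m₂.map fun b => add5 a b

/-- statistic of "cut, then cut the root part again" -/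
noncomputable def statB (F : List RTree) (c d : List CutShape) :
    ForestClass × ForestClass × ForestClass × ℕ × ℕ :=
  (clF (Pcut F c), clF (Pcut (Rcut F c) d), clF (Rcut (Rcut F c) d), fullsL c, fullsL d)

noncomputable def MB (F : List RTree) :
    Multiset (ForestClass × ForestClass × ForestClass × ℕ × ℕ) :=
  ((cutsF F : List (List CutShape)) : Multiset (List CutShape)).bind fun c =>
    ((cutsF (Rcut F c) : List (List CutShape)) : Multiset (List CutShape)).map fun d =>
      statB F c d

/-- statistic of "cut, then cut the pruned part again" -/
noncomputable def statA (F : List RTree) (c d : List CutShape) :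
    ForestClass × ForestClass × ForestClass × ℕ × ℕ :=
  (clF (Pcut (Pcut F c) d), clF (Rcut (Pcut F c) d), clF (Rcut F c), fullsL d,
    (Rcut (Pcut F c) d).length)

noncomputable def MA (F : List RTree) :
    Multiset (ForestClass × ForestClass × ForestClass × ℕ × ℕ) :=
  ((cutsF F : List (List CutShape)) : Multiset (List CutShape)).bind fun c =>
    ((cutsF (Pcut F c) : List (List CutShape)) : Multiset (List CutShape)).map fun d =>
      statA F c d

lemma statB_append {F₁ F₂ : List RTree} {a b d₁ d₂ : List CutShape}
    (ha : a ∈ cutsF F₁) (hd₁ : d₁ ∈ cutsF (Rcut F₁ a)) :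
    statB (F₁ ++ F₂) (a ++ b) (d₁ ++ d₂) = add5 (statB F₁ a d₁) (statB F₂ b d₂) := by
  unfold statB add5
  rw [Pcut_append F₁ F₂ a b (length_of_mem_cutsF ha),
    Rcut_append F₁ F₂ a b (length_of_mem_cutsF ha),
    Pcut_append _ _ d₁ d₂ (length_of_mem_cutsF hd₁),
    Rcut_append _ _ d₁ d₂ (length_of_mem_cutsF hd₁),
    clF_append, clF_append, clF_append, fullsL_append, fullsL_append]

lemma statA_append {F₁ F₂ : List RTree} {a b d₁ d₂ : List CutShape}
    (ha : a ∈ cutsF F₁) (hd₁ : d₁ ∈ cutsF (Pcut F₁ a)) :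
    statA (F₁ ++ F₂) (a ++ b) (d₁ ++ d₂) = add5 (statA F₁ a d₁) (statA F₂ b d₂) := by
  unfold statA add5
  rw [Pcut_append F₁ F₂ a b (length_of_mem_cutsF ha),
    Rcut_append F₁ F₂ a b (length_of_mem_cutsF ha),
    Pcut_append _ _ d₁ d₂ (length_of_mem_cutsF hd₁),
    Rcut_append _ _ d₁ d₂ (length_of_mem_cutsF hd₁),
    clF_append, clF_append, clF_append, fullsL_append, List.length_append]

lemma MB_append (F₁ F₂ : List RTree) : MB (F₁ ++ F₂) = conv5 (MB F₁) (MB F₂) := by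
  have hL : MB (F₁ ++ F₂)
      = ((cutsF F₁ : List _) : Multiset _).bind fun a =>
        ((cutsF F₂ : List _) : Multiset _).bind fun b =>
        ((cutsF (Rcut F₁ a) : List _) : Multiset _).bind fun d₁ =>
        ((cutsF (Rcut F₂ b) : List _) : Multiset _).map fun d₂ =>
          add5 (statB F₁ a d₁) (statB F₂ b d₂) := by
    unfold MB
    rw [cutsF_append, coe_flatMap, Multiset.bind_assoc]
    apply Multiset.bind_congr; intro a ha
    rw [← Multiset.map_coe, Multiset.bind_map]
    apply Multiset.bind_congr; intro b _
    rw [Rcut_append F₁ F₂ a b (length_of_mem_cutsF (Multiset.mem_coe.1 ha)),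
      cutsF_append, coe_flatMap, Multiset.map_bind]
    apply Multiset.bind_congr; intro d₁ hd₁
    rw [← Multiset.map_coe, Multiset.map_map]
    apply Multiset.map_congr rfl; intro d₂ _
    exact statB_append (Multiset.mem_coe.1 ha) (Multiset.mem_coe.1 hd₁)
  have hR : conv5 (MB F₁) (MB F₂)
      = ((cutsF F₁ : List _) : Multiset _).bind fun a =>
        ((cutsF (Rcut F₁ a) : List _) : Multiset _).bind fun d₁ =>
        ((cutsF F₂ : List _) : Multiset _).bind fun b =>
        ((cutsF (Rcut F₂ b) : List _) : Multiset _).map fun d₂ =>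
          add5 (statB F₁ a d₁) (statB F₂ b d₂) := by
    unfold conv5 MB
    rw [Multiset.bind_assoc]
    apply Multiset.bind_congr; intro a _
    rw [Multiset.bind_map]
    apply Multiset.bind_congr; intro d₁ _
    rw [Multiset.map_bind]
    apply Multiset.bind_congr; intro b _
    rw [Multiset.map_map]
    rfl
  rw [hL, hR]
  apply Multiset.bind_congr; intro a _
  rw [Multiset.bind_bind]

lemma MA_append (F₁ F₂ : List RTree) : MA (F₁ ++ F₂) = conv5 (MA F₁) (MA F₂) := by
  have hL : MA (F₁ ++ F₂)
      = ((cutsF F₁ : List _) : Multiset _).bind fun a =>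
        ((cutsF F₂ : List _) : Multiset _).bind fun b =>
        ((cutsF (Pcut F₁ a) : List _) : Multiset _).bind fun d₁ =>
        ((cutsF (Pcut F₂ b) : List _) : Multiset _).map fun d₂ =>
          add5 (statA F₁ a d₁) (statA F₂ b d₂) := by
    unfold MA
    rw [cutsF_append, coe_flatMap, Multiset.bind_assoc]
    apply Multiset.bind_congr; intro a ha
    rw [← Multiset.map_coe, Multiset.bind_map]
    apply Multiset.bind_congr; intro b _
    rw [Pcut_append F₁ F₂ a b (length_of_mem_cutsF (Multiset.mem_coe.1 ha)),
      cutsF_append, coe_flatMap, Multiset.map_bind]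
    apply Multiset.bind_congr; intro d₁ hd₁
    rw [← Multiset.map_coe, Multiset.map_map]
    apply Multiset.map_congr rfl; intro d₂ _
    exact statA_append (Multiset.mem_coe.1 ha) (Multiset.mem_coe.1 hd₁)
  have hR : conv5 (MA F₁) (MA F₂)
      = ((cutsF F₁ : List _) : Multiset _).bind fun a =>
        ((cutsF (Pcut F₁ a) : List _) : Multiset _).bind fun d₁ =>
        ((cutsF F₂ : List _) : Multiset _).bind fun b =>
        ((cutsF (Pcut F₂ b) : List _) : Multiset _).map fun d₂ =>
          add5 (statA F₁ a d₁) (statA F₂ b d₂) := by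
    unfold conv5 MA
    rw [Multiset.bind_assoc]
    apply Multiset.bind_congr; intro a _
    rw [Multiset.bind_map]
    apply Multiset.bind_congr; intro d₁ _
    rw [Multiset.map_bind]
    apply Multiset.bind_congr; intro b _
    rw [Multiset.map_map]
    rfl
  rw [hL, hR]
  apply Multiset.bind_congr; intro a _
  rw [Multiset.bind_bind]

/-- the "full cut at the root, nothing else" statistic of a single tree -/
noncomputable def sigFull (l : List RTree) : ForestClass × ForestClass × ForestClass × ℕ × ℕ :=
  ({clT (.node l)}, 0, 0, 1, 0)

noncomputable def wrap2 (s : ForestClass × ForestClass × ℕ) :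
    ForestClass × ForestClass × ForestClass × ℕ × ℕ :=
  (s.1, ({nodeCl s.2.1} : Multiset TreeClass), 0, s.2.2, 1)

noncomputable def wrap3 (s : ForestClass × ForestClass × ForestClass × ℕ × ℕ) :
    ForestClass × ForestClass × ForestClass × ℕ × ℕ :=
  (s.1, s.2.1, ({nodeCl s.2.2.1} : Multiset TreeClass), s.2.2.2.1, s.2.2.2.2)

lemma Rcut_single_full (l : List RTree) : Rcut [RTree.node l] [CutShape.full] = [] := by
  rw [Rcut_full, Rcut_nil_nil]

lemma Rcut_single_branch (l : List RTree) (ds : List CutShape) :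
    Rcut [RTree.node l] [CutShape.branch ds] = [RTree.node (Rcut l ds)] := by
  rw [Rcut_branch, Rcut_nil_nil]

lemma Pcut_single_full (l : List RTree) : Pcut [RTree.node l] [CutShape.full] = [RTree.node l] := by
  rw [Pcut_full, Pcut_nil_nil]

lemma Pcut_single_branch (l : List RTree) (ds : List CutShape) :
    Pcut [RTree.node l] [CutShape.branch ds] = Pcut l ds := by
  rw [Pcut_branch, Pcut_nil_nil, List.append_nil]

lemma fullsL_single_full : fullsL [CutShape.full] = 1 := by simp [fullsL]
lemma fullsL_single_branch (ds : List CutShape) : fullsL [CutShape.branch ds] = fullsL ds := by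
  simp [fullsL]

lemma statB_node_full (l : List RTree) :
    statB [RTree.node l] [CutShape.full] [] = sigFull l := by
  unfold statB sigFull
  simp [Pcut_single_full, Rcut_single_full, Pcut_nil_nil, Rcut_nil_nil, clF_singleton,
    clF_nil, fullsL]

lemma statB_node_branch_full (l : List RTree) (ds : List CutShape) :
    statB [RTree.node l] [CutShape.branch ds] [CutShape.full] = wrap2 (stat3 l ds) := by
  unfold statB wrap2 stat3
  rw [nodeCl_clF]
  simp [Pcut_single_branch, Rcut_single_branch, Pcut_single_full, Rcut_single_full,
    clF_singleton, clF_nil, fullsL]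

lemma statB_node_branch_branch (l : List RTree) (ds es : List CutShape) :
    statB [RTree.node l] [CutShape.branch ds] [CutShape.branch es]
      = wrap3 (statB l ds es) := by
  unfold statB wrap3
  rw [show (clF (Pcut l ds), clF (Pcut (Rcut l ds) es), clF (Rcut (Rcut l ds) es),
        fullsL ds, fullsL es).2.2.1 = clF (Rcut (Rcut l ds) es) from rfl, nodeCl_clF]
  simp [Pcut_single_branch, Rcut_single_branch, clF_singleton, fullsL]

lemma statA_node_full_full (l : List RTree) :
    statA [RTree.node l] [CutShape.full] [CutShape.full] = sigFull l := by
  unfold statA sigFull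
  simp [Pcut_single_full, Rcut_single_full, clF_singleton, clF_nil, fullsL]

lemma statA_node_full_branch (l : List RTree) (es : List CutShape) :
    statA [RTree.node l] [CutShape.full] [CutShape.branch es] = wrap2 (stat3 l es) := by
  unfold statA wrap2 stat3
  rw [show (clF (Pcut l es), clF (Rcut l es), fullsL es).2.1 = clF (Rcut l es) from rfl,
    nodeCl_clF]
  simp [Pcut_single_full, Rcut_single_full, Pcut_single_branch, Rcut_single_branch,
    clF_singleton, clF_nil, fullsL]

lemma statA_node_branch (l : List RTree) (ds d : List CutShape) :
    statA [RTree.node l] [CutShape.branch ds] d = wrap3 (statA l ds d) := by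
  unfold statA wrap3
  rw [show (clF (Pcut (Pcut l ds) d), clF (Rcut (Pcut l ds) d), clF (Rcut l ds), fullsL d,
        (Rcut (Pcut l ds) d).length).2.2.1 = clF (Rcut l ds) from rfl, nodeCl_clF]
  simp [Pcut_single_branch, Rcut_single_branch, clF_singleton]

lemma fullsL_nil : fullsL [] = 0 := by simp [fullsL]

lemma MB_nil : MB [] = {((0:ForestClass),(0:ForestClass),(0:ForestClass),0,0)} := by
  unfold MB
  rw [cutsF_nil, Multiset.coe_singleton, Multiset.singleton_bind, Rcut_nil_nil, cutsF_nil,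
    Multiset.coe_singleton, Multiset.map_singleton]
  unfold statB
  simp [Rcut_nil_nil, Pcut_nil_nil, clF_nil, fullsL]

lemma MA_nil : MA [] = {((0:ForestClass),(0:ForestClass),(0:ForestClass),0,0)} := by
  unfold MA
  rw [cutsF_nil, Multiset.coe_singleton, Multiset.singleton_bind, Pcut_nil_nil, cutsF_nil,
    Multiset.coe_singleton, Multiset.map_singleton]
  unfold statA
  simp [Rcut_nil_nil, Pcut_nil_nil, clF_nil, fullsL]

lemma MB_single (l : List RTree) :
    MB [RTree.node l] = sigFull l ::ₘ
      (Multiset.map wrap2 (cutStats l) + Multiset.map wrap3 (MB l)) := by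
  unfold MB
  rw [cutsF_single, ← Multiset.map_coe, Multiset.bind_map, ← Multiset.cons_coe,
    Multiset.cons_bind, ← Multiset.map_coe (f := CutShape.branch), Multiset.bind_map]
  have hhead : Multiset.map (fun d => statB [RTree.node l] [CutShape.full] d)
      ((cutsF (Rcut [RTree.node l] [CutShape.full]) : List _) : Multiset _)
      = {sigFull l} := by
    rw [Rcut_single_full, cutsF_nil, Multiset.coe_singleton, Multiset.map_singleton]
    show ({statB [RTree.node l] [CutShape.full] []} : Multiset _) = _
    rw [statB_node_full]
  have htail : (((cutsF l : List _) : Multiset (List CutShape)).bind fun ds =>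
      Multiset.map (fun d => statB [RTree.node l] [CutShape.branch ds] d)
        ((cutsF (Rcut [RTree.node l] [CutShape.branch ds]) : List _) : Multiset _))
      = Multiset.map wrap2 (cutStats l) + Multiset.map wrap3 (MB l) := by
    trans (((cutsF l : List _) : Multiset (List CutShape)).bind fun ds =>
      ({wrap2 (stat3 l ds)} : Multiset _) +
        Multiset.map (fun es => wrap3 (statB l ds es))
          ((cutsF (Rcut l ds) : List _) : Multiset _))
    · apply Multiset.bind_congr
      intro ds _
      rw [Multiset.singleton_add, Rcut_single_branch, cutsF_single, ← Multiset.map_coe,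
        Multiset.map_map, ← Multiset.cons_coe, Multiset.map_cons,
        ← Multiset.map_coe (f := CutShape.branch), Multiset.map_map]
      congr 1
      · show statB [RTree.node l] [CutShape.branch ds] [CutShape.full] = _
        exact statB_node_branch_full l ds
      · apply Multiset.map_congr rfl
        intro es _
        show statB [RTree.node l] [CutShape.branch ds] [CutShape.branch es] = _
        exact statB_node_branch_branch l ds es
    · rw [Multiset.bind_add, Multiset.bind_singleton]
      congr 1
      · unfold cutStats
        rw [Multiset.map_map]
        apply Multiset.map_congr rfl
        intro ds _
        rfl
      · unfold MB
        rw [Multiset.map_bind]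
        apply Multiset.bind_congr
        intro ds _
        rw [Multiset.map_map]
        apply Multiset.map_congr rfl
        intro es _
        rfl
  rw [hhead, htail, Multiset.singleton_add]
  rfl

lemma MA_single (l : List RTree) :
    MA [RTree.node l] = sigFull l ::ₘ
      (Multiset.map wrap2 (cutStats l) + Multiset.map wrap3 (MA l)) := by
  unfold MA
  rw [cutsF_single, ← Multiset.map_coe, Multiset.bind_map, ← Multiset.cons_coe,
    Multiset.cons_bind, ← Multiset.map_coe (f := CutShape.branch), Multiset.bind_map]
  have hhead : Multiset.map (fun d => statA [RTree.node l] [CutShape.full] d)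
      ((cutsF (Pcut [RTree.node l] [CutShape.full]) : List _) : Multiset _)
      = sigFull l ::ₘ Multiset.map wrap2 (cutStats l) := by
    rw [Pcut_single_full, cutsF_single, ← Multiset.map_coe, Multiset.map_map,
      ← Multiset.cons_coe, Multiset.map_cons, ← Multiset.map_coe (f := CutShape.branch),
      Multiset.map_map]
    congr 1
    · show statA [RTree.node l] [CutShape.full] [CutShape.full] = _
      exact statA_node_full_full l
    · unfold cutStats
      rw [Multiset.map_map]
      apply Multiset.map_congr rfl
      intro es _
      show statA [RTree.node l] [CutShape.full] [CutShape.branch es] = _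
      exact statA_node_full_branch l es
  have htail : (((cutsF l : List _) : Multiset (List CutShape)).bind fun ds =>
      Multiset.map (fun d => statA [RTree.node l] [CutShape.branch ds] d)
        ((cutsF (Pcut [RTree.node l] [CutShape.branch ds]) : List _) : Multiset _))
      = Multiset.map wrap3 (MA l) := by
    trans (((cutsF l : List _) : Multiset (List CutShape)).bind fun ds =>
      Multiset.map (fun d => wrap3 (statA l ds d))
        ((cutsF (Pcut l ds) : List _) : Multiset _))
    · apply Multiset.bind_congr
      intro ds _
      rw [Pcut_single_branch]
      apply Multiset.map_congr rfl
      intro d _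
      exact statA_node_branch l ds d
    · unfold MA
      rw [Multiset.map_bind]
      apply Multiset.bind_congr
      intro ds _
      rw [Multiset.map_map]
      apply Multiset.map_congr rfl
      intro d _
      rfl
  rw [hhead, htail, Multiset.cons_add]
  rfl

lemma master : ∀ (n : ℕ) (F : List RTree), sizeL F = n → MB F = MA F := by
  intro n
  induction n using Nat.strong_induction_on with
  | _ n IH =>
    intro F hF
    cases F with
    | nil => rw [MB_nil, MA_nil]
    | cons t ts =>
        cases t with
        | node l =>
            have hs : sizeL (RTree.node l :: ts) = 1 + sizeL l + sizeL ts := by simp [sizeL]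
            have h1 : sizeL l < n := by omega
            have h2 : sizeL ts < n := by omega
            rw [show (RTree.node l :: ts) = [RTree.node l] ++ ts from rfl, MB_append, MA_append,
              IH _ h2 ts rfl, MB_single, MA_single, IH _ h1 l rfl]

lemma MB_eq_MA (F : List RTree) : MB F = MA F := master (sizeL F) F rfl

end PartD

/-! ### Part E1: counting helpers -/

section PartE1

lemma countP_map' {α β : Type*} (p : β → Prop) [DecidablePred p] (f : α → β) (m : Multiset α) :
    Multiset.countP p (Multiset.map f m) = Multiset.countP (fun x => p (f x)) m := by
  rw [Multiset.countP_map, Multiset.countP_eq_card_filter]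

lemma countP_bind {α β : Type*} (p : β → Prop) [DecidablePred p] (s : Multiset α)
    (f : α → Multiset β) :
    Multiset.countP p (s.bind f) = (s.map fun a => Multiset.countP p (f a)).sum := by
  induction s using Multiset.induction with
  | empty => simp
  | cons a s ih => simp [Multiset.cons_bind, ih]

lemma sum_map_ite_m {α : Type*} (m : Multiset α) (ψ : α → Prop) [DecidablePred ψ] :
    (m.map fun s => if ψ s then 1 else 0).sum = Multiset.countP ψ m := by
  induction m using Multiset.induction with
  | empty => simp
  | cons a s ih =>
      by_cases h : ψ a <;> simp [h, ih, Multiset.countP_cons, Nat.add_comm]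

lemma countP_cutStats (F : List RTree) (p : ForestClass × ForestClass × ℕ → Prop)
    [DecidablePred p] :
    Multiset.countP p (cutStats F) = (cutsF F).countP fun c => decide (p (stat3 F c)) := by
  unfold cutStats
  rw [countP_map', Multiset.coe_countP]

lemma singleton_add_eq_singleton {α : Type*} {a x : α} {s : Multiset α} :
    ({a} : Multiset α) + s = {x} ↔ a = x ∧ s = 0 := by
  constructor
  · intro h
    have hc := congrArg Multiset.card h
    simp only [Multiset.card_add, Multiset.card_singleton] at hc
    have hs : s = 0 := Multiset.card_eq_zero.1 (by omega)
    subst hs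
    simp only [add_zero] at h
    exact ⟨Multiset.singleton_inj.1 h, rfl⟩
  · rintro ⟨rfl, rfl⟩
    simp

/-- counting cuts with no fulls and a property of the statistic: only the empty cut. -/
lemma countP_zero_stat (F : List RTree) (ψ : ForestClass × ForestClass × ℕ → Prop)
    [DecidablePred ψ] :
    Multiset.countP (fun s => s.2.2 = 0 ∧ ψ s) (cutStats F)
      = if ψ ((0 : ForestClass), clF F, 0) then 1 else 0 := by
  rw [countP_cutStats]
  have key : ∀ c ∈ cutsF F,
      (((stat3 F c).2.2 = 0 ∧ ψ (stat3 F c))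
        ↔ (fullsL c = 0 ∧ ψ ((0 : ForestClass), clF F, 0))) := by
    intro c hc
    constructor
    · rintro ⟨h0, hψ⟩
      have h0' : fullsL c = 0 := h0
      obtain ⟨hP, hR⟩ := zeroCut hc h0'
      have : stat3 F c = ((0 : ForestClass), clF F, 0) := by
        unfold stat3
        rw [hP, hR, clF_nil, h0']
      rw [this] at hψ
      exact ⟨h0', hψ⟩
    · rintro ⟨h0, hψ⟩
      obtain ⟨hP, hR⟩ := zeroCut hc h0
      have hs : stat3 F c = ((0 : ForestClass), clF F, 0) := by
        unfold stat3
        rw [hP, hR, clF_nil, h0]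
      rw [hs]
      exact ⟨rfl, hψ⟩
  rw [List.countP_congr
    (q := fun c => decide (fullsL c = 0 ∧ ψ ((0 : ForestClass), clF F, 0)))
    (fun c hc => by simp only [decide_eq_true_eq]; exact key c hc)]
  by_cases hψ : ψ ((0 : ForestClass), clF F, 0)
  · simp only [hψ, if_true]
    rw [List.countP_congr (q := fun c => decide (fullsL c = 0))
      (fun c _ => by simp only [decide_eq_true_eq]; tauto)]
    exact cnt0 F
  · simp only [hψ, if_false]
    apply List.countP_eq_zero.2
    intro c _
    simp only [decide_eq_true_eq]
    tauto

/-- the head statistic of a single tree -/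
lemma mem_cutStats_single {p : RTree} {s : ForestClass × ForestClass × ℕ}
    (hs : s ∈ cutStats [p]) :
    s = ({clT p}, (0 : ForestClass), 1) ∨
      ∃ u ∈ cutStats (childrenF p), s = (u.1, ({nodeCl u.2.1} : Multiset TreeClass), u.2.2) := by
  cases p with
  | node l =>
      rw [cutStats_single] at hs
      rcases Multiset.mem_cons.1 hs with h | h
      · exact Or.inl h
      · obtain ⟨u, hu, rfl⟩ := Multiset.mem_map.1 h
        exact Or.inr ⟨u, hu, rfl⟩

end PartE1

/-! ### Part E2: the symmetric incomparable-pair count -/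

section PartE2

/-- the statistic predicate "pruned ≅ X, remaining ≅ Y, one full" -/
noncomputable def phiA (X Y : TreeClass) (s : ForestClass × ForestClass × ℕ) : Prop :=
  s.1 = ({X} : Multiset TreeClass) ∧ s.2.1 = ({Y} : Multiset TreeClass) ∧ s.2.2 = 1

lemma pair_ne_singleton {a b y : TreeClass} :
    ({a} : Multiset TreeClass) + {b} ≠ {y} := by
  intro h
  have := congrArg Multiset.card h
  simp at this

lemma countP_pair (p q : RTree) (X Y : TreeClass) :
    Multiset.countP (phiA X Y) (cutStats [p, q])
      = (if clT p = X ∧ clT q = Y then 1 else 0)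
        + (if clT q = X ∧ clT p = Y then 1 else 0) := by
  cases p with | node lp =>
  cases q with | node lq =>
  have hps : cutStats [RTree.node lp, RTree.node lq]
      = conv3 (cutStats [RTree.node lp]) (cutStats [RTree.node lq]) :=
    cutStats_cons (RTree.node lp) [RTree.node lq]
  rw [hps]
  unfold conv3
  rw [countP_bind]
  rw [Multiset.map_congr rfl (fun a _ => countP_map' (phiA X Y) (add3 a) _)]
  rw [cutStats_single lp, Multiset.map_cons, Multiset.sum_cons, Multiset.map_map]
  -- head term : cut the whole of p away
  have hhead : Multiset.countP (fun b => phiA X Y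
        (add3 ({clT (RTree.node lp)}, (0:ForestClass), 1) b)) (cutStats [RTree.node lq])
      = if clT (RTree.node lp) = X ∧ clT (RTree.node lq) = Y then 1 else 0 := by
    rw [Multiset.countP_congr rfl (p' := fun b => b.2.2 = 0 ∧
        (({clT (RTree.node lp)} : Multiset TreeClass) + b.1 = {X} ∧ b.2.1 = {Y}))
      (fun b _ => propext (by
        simp only [phiA, add3, zero_add]
        constructor
        · rintro ⟨h1, h2, h3⟩
          exact ⟨by omega, h1, h2⟩
        · rintro ⟨h1, h2, h3⟩
          exact ⟨h2, h3, by omega⟩))]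
    rw [countP_zero_stat _ (fun b => ({clT (RTree.node lp)} : Multiset TreeClass) + b.1 = {X}
        ∧ b.2.1 = ({Y} : Multiset TreeClass))]
    have hiff : (({clT (RTree.node lp)} : Multiset TreeClass)
          + ((0 : ForestClass), clF [RTree.node lq], 0).1 = {X}
        ∧ ((0 : ForestClass), clF [RTree.node lq], 0).2.1 = ({Y} : Multiset TreeClass))
        ↔ (clT (RTree.node lp) = X ∧ clT (RTree.node lq) = Y) := by
      simp only [add_zero, clF_singleton]
      exact and_congr Multiset.singleton_inj Multiset.singleton_inj
    rw [if_congr hiff rfl rfl]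
  rw [hhead]
  -- tail terms : a genuine cut of p together with removing all of q
  have htail : ∀ u ∈ cutStats lp,
      Multiset.countP (fun b => phiA X Y
          (add3 (u.1, ({nodeCl u.2.1} : Multiset TreeClass), u.2.2) b))
        (cutStats [RTree.node lq])
      = if (u.2.2 = 0 ∧ (u.1 + {clT (RTree.node lq)} = ({X} : Multiset TreeClass)
          ∧ ({nodeCl u.2.1} : Multiset TreeClass) = {Y})) then 1 else 0 := by
    intro u _
    rw [cutStats_single lq, Multiset.countP_cons]
    have hz : Multiset.countP (fun b => phiA X Y
        (add3 (u.1, ({nodeCl u.2.1} : Multiset TreeClass), u.2.2) b))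
        ((cutStats lq).map (fun s => (s.1, ({nodeCl s.2.1} : Multiset TreeClass), s.2.2)))
        = 0 := by
      apply Multiset.countP_eq_zero.2
      intro b hb
      obtain ⟨v, _, rfl⟩ := Multiset.mem_map.1 hb
      rintro ⟨_, h2, _⟩
      exact pair_ne_singleton h2
    rw [hz]
    simp only [Nat.zero_add]
    congr 1
    apply propext
    simp only [phiA, add3]
    constructor
    · rintro ⟨h1, h2, h3⟩
      exact ⟨by omega, h1, by simpa using h2⟩
    · rintro ⟨h1, h2, h3⟩
      exact ⟨h2, by simpa using h3, by omega⟩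
  have hmap : Multiset.map
      ((fun a => Multiset.countP (fun x => phiA X Y (add3 a x)) (cutStats [RTree.node lq]))
        ∘ fun s => (s.1, ({nodeCl s.2.1} : Multiset TreeClass), s.2.2)) (cutStats lp)
      = Multiset.map (fun u => if (u.2.2 = 0
          ∧ (u.1 + {clT (RTree.node lq)} = ({X} : Multiset TreeClass)
            ∧ ({nodeCl u.2.1} : Multiset TreeClass) = {Y})) then 1 else 0) (cutStats lp) := by
    apply Multiset.map_congr rfl
    intro u hu
    exact htail u hu
  rw [hmap, sum_map_ite_m]
  rw [countP_zero_stat _ (fun u => u.1 + {clT (RTree.node lq)} = ({X} : Multiset TreeClass)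
      ∧ ({nodeCl u.2.1} : Multiset TreeClass) = ({Y} : Multiset TreeClass))]
  congr 1
  have hiff2 : (((0 : ForestClass), clF lp, 0).1 + {clT (RTree.node lq)}
        = ({X} : Multiset TreeClass)
      ∧ ({nodeCl ((0 : ForestClass), clF lp, 0).2.1} : Multiset TreeClass)
        = ({Y} : Multiset TreeClass))
      ↔ (clT (RTree.node lq) = X ∧ clT (RTree.node lp) = Y) := by
    simp only [zero_add, nodeCl_clF]
    exact and_congr Multiset.singleton_inj Multiset.singleton_inj
  rw [if_congr hiff2 rfl rfl]

lemma cutStats_nil : cutStats [] = {((0 : ForestClass), (0 : ForestClass), 0)} := by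
  unfold cutStats
  rw [cutsF_nil, Multiset.coe_singleton, Multiset.map_singleton]
  unfold stat3
  rw [Pcut_nil_nil, Rcut_nil_nil, clF_nil]
  simp [fullsL]

lemma symG (X Y : TreeClass) : ∀ (P : List RTree), P.length ≠ 1 →
    Multiset.countP (phiA X Y) (cutStats P) = Multiset.countP (phiA Y X) (cutStats P) := by
  intro P hlen
  match P with
  | [] =>
      rw [cutStats_nil]
      have h0 : ∀ Z W : TreeClass, ¬ phiA Z W ((0 : ForestClass), (0 : ForestClass), 0) := by
        intro Z W ⟨h1, _, _⟩
        exact Multiset.singleton_ne_zero _ h1.symm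
      rw [Multiset.countP_eq_zero.2 (by simpa using h0 X Y),
        Multiset.countP_eq_zero.2 (by simpa using h0 Y X)]
  | [p] => exact absurd rfl hlen
  | [p, q] =>
      rw [countP_pair, countP_pair, Nat.add_comm]
      congr 1
      · exact if_congr and_comm rfl rfl
      · exact if_congr and_comm rfl rfl
  | p :: q :: r :: rest =>
      have hlen3 : (p :: q :: r :: rest).length = 3 + rest.length := by simp; omega
      have hzero : ∀ Z W : TreeClass,
          Multiset.countP (phiA Z W) (cutStats (p :: q :: r :: rest)) = 0 := by
        intro Z W
        apply Multiset.countP_eq_zero.2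
        intro s hs
        obtain ⟨c, hc, rfl⟩ := Multiset.mem_map.1 hs
        rintro ⟨h1, h2, h3⟩
        have hc' : c ∈ cutsF (p :: q :: r :: rest) := Multiset.mem_coe.1 hc
        have hR : (Rcut (p :: q :: r :: rest) c).length = 1 := by
          have := card_clF (Rcut (p :: q :: r :: rest) c)
          rw [show clF (Rcut (p :: q :: r :: rest) c) = ({W} : Multiset TreeClass) from h2]
            at this
          simpa using this.symm
        have hful : fullsL c = 1 := h3
        have := length_le_Rcut_add hc'
        omega
      rw [hzero X Y, hzero Y X]

end PartE2

/-! ### Part E3: grouping counts by the class of the intermediate tree -/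

section PartE3

lemma group_point {α : Type*} (x : α) (q : α → Prop) (cls : α → ForestClass) (g : α → ℕ)
    (fin : Finset TreeClass) (val : TreeClass → ℕ)
    (hval : q x → ∀ S : TreeClass, cls x = {S} → g x = val S)
    (hfin : q x → g x ≠ 0 → ∃ S ∈ fin, cls x = {S}) :
    (∑ S ∈ fin, (if q x ∧ cls x = ({S} : Multiset TreeClass) then 1 else 0) * val S)
      = if q x then g x else 0 := by
  by_cases hq : q x
  · by_cases hex : ∃ S₀ : TreeClass, cls x = ({S₀} : Multiset TreeClass)
    · obtain ⟨S₀, hS₀⟩ := hex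
      have hiff : ∀ S : TreeClass, (q x ∧ cls x = ({S} : Multiset TreeClass)) ↔ S = S₀ := by
        intro S
        constructor
        · rintro ⟨_, h⟩
          rw [hS₀] at h
          exact (Multiset.singleton_inj.1 h).symm
        · rintro rfl
          exact ⟨hq, hS₀⟩
      have h1 : (∑ S ∈ fin, (if q x ∧ cls x = ({S} : Multiset TreeClass) then 1 else 0) * val S)
          = ∑ S ∈ fin, (if S = S₀ then val S else 0) := by
        apply Finset.sum_congr rfl
        intro S _
        rw [if_congr (hiff S) rfl rfl]
        by_cases h : S = S₀ <;> simp [h]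
      rw [h1, Finset.sum_ite_eq' fin S₀ val]
      by_cases hmem : S₀ ∈ fin
      · simp only [hmem, if_true, hq]
        exact (hval hq S₀ hS₀).symm
      · have hg : g x = 0 := by
          by_contra hg
          obtain ⟨S₁, hS₁mem, hS₁⟩ := hfin hq hg
          rw [hS₀] at hS₁
          exact hmem ((Multiset.singleton_inj.1 hS₁) ▸ hS₁mem)
        simp [hmem, hq, hg]
    · have hg : g x = 0 := by
        by_contra hg
        obtain ⟨S₁, _, hS₁⟩ := hfin hq hg
        exact hex ⟨S₁, hS₁⟩
      rw [Finset.sum_eq_zero, if_pos hq, hg]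
      intro S _
      rw [if_neg (fun h => hex ⟨S, h.2⟩)]
      exact Nat.zero_mul _
  · rw [Finset.sum_eq_zero, if_neg hq]
    intro S _
    rw [if_neg (fun h => hq h.1)]
    exact Nat.zero_mul _

lemma group_count {α : Type*} (L : List α) (q : α → Prop) (cls : α → ForestClass)
    (g : α → ℕ) (fin : Finset TreeClass) (val : TreeClass → ℕ)
    (hval : ∀ x ∈ L, q x → ∀ S : TreeClass, cls x = ({S} : Multiset TreeClass) → g x = val S)
    (hfin : ∀ x ∈ L, q x → g x ≠ 0 → ∃ S ∈ fin, cls x = ({S} : Multiset TreeClass)) :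
    (L.map fun x => if q x then g x else 0).sum
      = ∑ S ∈ fin, (L.countP fun x => decide (q x ∧ cls x = ({S} : Multiset TreeClass))) * val S
    := by
  induction L with
  | nil => simp
  | cons x L ih =>
      rw [List.map_cons, List.sum_cons,
        ih (fun y hy => hval y (List.mem_cons_of_mem x hy))
          (fun y hy => hfin y (List.mem_cons_of_mem x hy))]
      have hsum : ∀ S ∈ fin,
          (List.countP (fun y => decide (q y ∧ cls y = ({S} : Multiset TreeClass))) (x :: L))
              * val S
          = (List.countP (fun y => decide (q y ∧ cls y = ({S} : Multiset TreeClass))) L) * val S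
            + (if q x ∧ cls x = ({S} : Multiset TreeClass) then 1 else 0) * val S := by
        intro S _
        rw [List.countP_cons]
        by_cases h : q x ∧ cls x = ({S} : Multiset TreeClass) <;> simp [h] <;> ring
      rw [Finset.sum_congr rfl hsum, Finset.sum_add_distrib,
        group_point x q cls g fin val (hval x (List.mem_cons_self))
          (hfin x (List.mem_cons_self))]
      omega

lemma aCount_eq_countP (X Y T : TreeClass) :
    aCount X Y T = Multiset.countP (phiA X Y) (cutStats [repT T]) := by
  rw [countP_cutStats]
  unfold aCount
  apply List.countP_congr
  intro c _
  simp only [decide_eq_true_eq]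
  simp only [decide_eq_true_eq, phiA, stat3]
  tauto

lemma aCount_eq_countP' (X Y T : TreeClass) {F : List RTree}
    (h : clF F = ({T} : Multiset TreeClass)) :
    Multiset.countP (phiA X Y) (cutStats F) = aCount X Y T := by
  rw [aCount_eq_countP, cutStats_congr (h.trans (clF_repT_single T).symm)]

/-- nonzero `phiA`-count forces the size of the forest. -/
lemma size_of_phiA_count {X Y : TreeClass} {F : List RTree}
    (h : Multiset.countP (phiA X Y) (cutStats F) ≠ 0) :
    sizeL F = sizeT X + sizeT Y := by
  have : ∃ s ∈ cutStats F, phiA X Y s := by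
    by_contra hc
    push_neg at hc
    exact h (Multiset.countP_eq_zero.2 hc)
  obtain ⟨s, hs, hphi⟩ := this
  obtain ⟨c, hc, rfl⟩ := Multiset.mem_map.1 hs
  have hc' : c ∈ cutsF F := Multiset.mem_coe.1 hc
  obtain ⟨h1, h2, _⟩ := hphi
  have hP : sizeL (Pcut F c) = sizeT X := sizeL_of_clF_single h1
  have hR : sizeL (Rcut F c) = sizeT Y := sizeL_of_clF_single h2
  have := sizeL_Pcut_add_Rcut hc'
  omega

end PartE3

/-! ### Part E4: counting the key statistic in `MB` and `MA` -/

section PartE4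

lemma count_map_eq {α β : Type*} [DecidableEq β] (σ : β) (f : α → β) (m : Multiset α) :
    Multiset.count σ (Multiset.map f m) = Multiset.countP (fun d => σ = f d) m := by
  rw [Multiset.count_map, ← Multiset.countP_eq_card_filter]

lemma count_MB (T1 T2 T3 T : TreeClass) :
    Multiset.count (({T1} : ForestClass), ({T2} : ForestClass), ({T3} : ForestClass), 1, 1)
        (MB [repT T])
      = ∑ S ∈ treeCand (sizeT T2 + sizeT T3), (aCount T1 S T) * (aCount T2 T3 S) := by
  have step : Multiset.count
        (({T1} : ForestClass), ({T2} : ForestClass), ({T3} : ForestClass), 1, 1) (MB [repT T])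
      = ((cutsF [repT T]).map fun c =>
          if fullsL c = 1 ∧ clF (Pcut [repT T] c) = ({T1} : Multiset TreeClass)
          then Multiset.countP (phiA T2 T3) (cutStats (Rcut [repT T] c)) else 0).sum := by
    unfold MB
    rw [Multiset.count_bind, Multiset.map_coe, Multiset.sum_coe]
    apply congrArg List.sum
    apply List.map_congr_left
    intro c _
    rw [count_map_eq]
    by_cases hq : fullsL c = 1 ∧ clF (Pcut [repT T] c) = ({T1} : Multiset TreeClass)
    · rw [if_pos hq]
      rw [Multiset.countP_congr rfl
        (p' := fun d => phiA T2 T3 (stat3 (Rcut [repT T] c) d))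
        (fun d _ => propext (by
          simp only [statB, stat3, phiA, Prod.mk.injEq]
          constructor
          · rintro ⟨h1, h2, h3, h4, h5⟩
            exact ⟨h2.symm, h3.symm, h5.symm⟩
          · rintro ⟨h1, h2, h3⟩
            exact ⟨hq.2.symm, h1.symm, h2.symm, hq.1.symm, h3.symm⟩))]
      unfold cutStats
      rw [countP_map']
    · rw [if_neg hq]
      apply Multiset.countP_eq_zero.2
      intro d _ heq
      apply hq
      simp only [statB, Prod.mk.injEq] at heq
      exact ⟨heq.2.2.2.1.symm, heq.1.symm⟩
  have hfinB : ∀ c ∈ cutsF [repT T],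
      (fullsL c = 1 ∧ clF (Pcut [repT T] c) = ({T1} : Multiset TreeClass)) →
      Multiset.countP (phiA T2 T3) (cutStats (Rcut [repT T] c)) ≠ 0 →
      ∃ S ∈ treeCand (sizeT T2 + sizeT T3),
        clF (Rcut [repT T] c) = ({S} : Multiset TreeClass) := by
    intro c hc hq hg
    obtain ⟨l, hl⟩ : ∃ l, repT T = RTree.node l := by
      cases hrt : repT T with
      | node l => exact ⟨l, rfl⟩
    rw [hl] at hc hg ⊢
    rcases mem_cutsF_cons.1 hc with ⟨cs, hcs, rfl⟩ | ⟨ds, hds, cs, hcs, rfl⟩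
    · exfalso
      rw [mem_cutsF_nil.1 hcs] at hg
      rw [Rcut_single_full, cutStats_nil] at hg
      apply hg
      apply Multiset.countP_eq_zero.2
      intro s hs
      rw [Multiset.mem_singleton.1 hs]
      rintro ⟨h1, _, _⟩
      exact Multiset.singleton_ne_zero _ h1.symm
    · rw [mem_cutsF_nil.1 hcs] at hg ⊢
      rw [Rcut_single_branch] at hg ⊢
      refine ⟨clT (RTree.node (Rcut l ds)), ?_, by rw [clF_singleton]⟩
      apply treeCand_complete
      have h1 : sizeL [RTree.node (Rcut l ds)] = sizeT T2 + sizeT T3 :=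
        size_of_phiA_count hg
      have h2 : sizeT (clT (RTree.node (Rcut l ds))) = sizeL [RTree.node (Rcut l ds)] :=
        (sizeL_of_clF_single (clF_singleton _)).symm
      omega
  have hg := group_count (cutsF [repT T])
    (fun c => fullsL c = 1 ∧ clF (Pcut [repT T] c) = ({T1} : Multiset TreeClass))
    (fun c => clF (Rcut [repT T] c))
    (fun c => Multiset.countP (phiA T2 T3) (cutStats (Rcut [repT T] c)))
    (treeCand (sizeT T2 + sizeT T3)) (fun S => aCount T2 T3 S)
    (fun c _ _ S hS => aCount_eq_countP' T2 T3 S hS) hfinB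
  rw [step]
  refine Eq.trans ?_ (hg.trans ?_)
  · apply congrArg List.sum
    apply List.map_congr_left
    intro c _
    by_cases h : (fullsL c = 1 ∧ clF (Pcut [repT T] c) = ({T1} : Multiset TreeClass))
    · rw [if_pos h, if_pos h]
    · rw [if_neg h, if_neg h]
  · apply Finset.sum_congr rfl
    intro S _
    congr 1
    unfold aCount
    apply List.countP_congr
    intro c _
    simp only [decide_eq_true_eq]
    tauto

lemma count_MA (T1 T2 T3 T : TreeClass) :
    Multiset.count (({T1} : ForestClass), ({T2} : ForestClass), ({T3} : ForestClass), 1, 1)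
        (MA [repT T])
      = (∑ S ∈ treeCand (sizeT T1 + sizeT T2), (aCount S T3 T) * (aCount T1 T2 S))
        + ((cutsF [repT T]).map fun c =>
            if clF (Rcut [repT T] c) = ({T3} : Multiset TreeClass) ∧ fullsL c ≠ 1
            then Multiset.countP (phiA T1 T2) (cutStats (Pcut [repT T] c)) else 0).sum := by
  have step : Multiset.count
        (({T1} : ForestClass), ({T2} : ForestClass), ({T3} : ForestClass), 1, 1) (MA [repT T])
      = ((cutsF [repT T]).map fun c =>
          if clF (Rcut [repT T] c) = ({T3} : Multiset TreeClass)
          then Multiset.countP (phiA T1 T2) (cutStats (Pcut [repT T] c)) else 0).sum := by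
    unfold MA
    rw [Multiset.count_bind, Multiset.map_coe, Multiset.sum_coe]
    apply congrArg List.sum
    apply List.map_congr_left
    intro c _
    rw [count_map_eq]
    by_cases hq : clF (Rcut [repT T] c) = ({T3} : Multiset TreeClass)
    · rw [if_pos hq]
      rw [Multiset.countP_congr rfl
        (p' := fun d => phiA T1 T2 (stat3 (Pcut [repT T] c) d))
        (fun d _ => propext (by
          simp only [statA, stat3, phiA, Prod.mk.injEq]
          constructor
          · rintro ⟨h1, h2, h3, h4, h5⟩
            exact ⟨h1.symm, h2.symm, h4.symm⟩
          · rintro ⟨h1, h2, h3⟩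
            have hlen : (Rcut (Pcut [repT T] c) d).length = 1 := by
              have := card_clF (Rcut (Pcut [repT T] c) d)
              rw [h2] at this
              simpa using this.symm
            exact ⟨h1.symm, h2.symm, hq.symm, h3.symm, hlen.symm⟩))]
      unfold cutStats
      rw [countP_map']
    · rw [if_neg hq]
      apply Multiset.countP_eq_zero.2
      intro d _ heq
      apply hq
      simp only [statA, Prod.mk.injEq] at heq
      exact heq.2.2.1.symm
  rw [step]
  have split : ∀ c ∈ cutsF [repT T],
      (if clF (Rcut [repT T] c) = ({T3} : Multiset TreeClass)
        then Multiset.countP (phiA T1 T2) (cutStats (Pcut [repT T] c)) else 0)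
      = (if (clF (Rcut [repT T] c) = ({T3} : Multiset TreeClass) ∧ fullsL c = 1)
          then Multiset.countP (phiA T1 T2) (cutStats (Pcut [repT T] c)) else 0)
        + (if clF (Rcut [repT T] c) = ({T3} : Multiset TreeClass) ∧ fullsL c ≠ 1
          then Multiset.countP (phiA T1 T2) (cutStats (Pcut [repT T] c)) else 0) := by
    intro c _
    by_cases h1 : clF (Rcut [repT T] c) = ({T3} : Multiset TreeClass)
    · by_cases h2 : fullsL c = 1 <;> simp [h1, h2]
    · simp [h1]
  rw [List.map_congr_left split]
  have hadd : ∀ (L : List (List CutShape)) (f g : List CutShape → ℕ),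
      (L.map fun c => f c + g c).sum = (L.map f).sum + (L.map g).sum := by
    intro L f g
    induction L with
    | nil => rfl
    | cons a L ih => simp [ih]; omega
  rw [hadd]
  congr 1
  have hfinA : ∀ c ∈ cutsF [repT T],
      (clF (Rcut [repT T] c) = ({T3} : Multiset TreeClass) ∧ fullsL c = 1) →
      Multiset.countP (phiA T1 T2) (cutStats (Pcut [repT T] c)) ≠ 0 →
      ∃ S ∈ treeCand (sizeT T1 + sizeT T2),
        clF (Pcut [repT T] c) = ({S} : Multiset TreeClass) := by
    intro c hc hq hg
    have hlenP : (Pcut [repT T] c).length = 1 := by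
      rw [length_Pcut hc, hq.2]
    obtain ⟨p, hp⟩ := List.length_eq_one_iff.1 hlenP
    refine ⟨clT p, ?_, by rw [hp, clF_singleton]⟩
    apply treeCand_complete
    have h1 : sizeL (Pcut [repT T] c) = sizeT T1 + sizeT T2 := size_of_phiA_count hg
    have h2 : sizeT (clT p) = sizeL [p] := (sizeL_of_clF_single (clF_singleton _)).symm
    rw [hp] at h1
    omega
  have hg := group_count (cutsF [repT T])
    (fun c => clF (Rcut [repT T] c) = ({T3} : Multiset TreeClass) ∧ fullsL c = 1)
    (fun c => clF (Pcut [repT T] c))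
    (fun c => Multiset.countP (phiA T1 T2) (cutStats (Pcut [repT T] c)))
    (treeCand (sizeT T1 + sizeT T2)) (fun S => aCount T1 T2 S)
    (fun c _ _ S hS => aCount_eq_countP' T1 T2 S hS) hfinA
  refine Eq.trans ?_ (hg.trans ?_)
  · apply congrArg List.sum
    apply List.map_congr_left
    intro c _
    by_cases h : (clF (Rcut [repT T] c) = ({T3} : Multiset TreeClass) ∧ fullsL c = 1)
    · rw [if_pos h, if_pos h]
    · rw [if_neg h, if_neg h]
  · apply Finset.sum_congr rfl
    intro S _
    congr 1
    unfold aCount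
    apply List.countP_congr
    intro c _
    simp only [decide_eq_true_eq]
    tauto

lemma Ipart_symm (T1 T2 T3 T : TreeClass) :
    ((cutsF [repT T]).map fun c =>
        if clF (Rcut [repT T] c) = ({T3} : Multiset TreeClass) ∧ fullsL c ≠ 1
        then Multiset.countP (phiA T1 T2) (cutStats (Pcut [repT T] c)) else 0).sum
    = ((cutsF [repT T]).map fun c =>
        if clF (Rcut [repT T] c) = ({T3} : Multiset TreeClass) ∧ fullsL c ≠ 1
        then Multiset.countP (phiA T2 T1) (cutStats (Pcut [repT T] c)) else 0).sum := by
  apply congrArg List.sum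
  apply List.map_congr_left
  intro c hc
  by_cases h : clF (Rcut [repT T] c) = ({T3} : Multiset TreeClass) ∧ fullsL c ≠ 1
  · rw [if_pos h, if_pos h]
    exact symG T1 T2 (Pcut [repT T] c) (by rw [length_Pcut hc]; exact h.2)
  · rw [if_neg h, if_neg h]

lemma key_nat (T1 T2 T3 T : TreeClass) :
    (∑ S ∈ treeCand (sizeT T1 + sizeT T2), (aCount S T3 T) * (aCount T1 T2 S))
      + (∑ S ∈ treeCand (sizeT T1 + sizeT T3), (aCount T2 S T) * (aCount T1 T3 S))
    = (∑ S ∈ treeCand (sizeT T2 + sizeT T1), (aCount S T3 T) * (aCount T2 T1 S))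
      + (∑ S ∈ treeCand (sizeT T2 + sizeT T3), (aCount T1 S T) * (aCount T2 T3 S)) := by
  have e1 := count_MB T1 T2 T3 T
  have e2 := count_MB T2 T1 T3 T
  have e3 := count_MA T1 T2 T3 T
  have e4 := count_MA T2 T1 T3 T
  have em := MB_eq_MA [repT T]
  rw [em] at e1 e2
  have hI := Ipart_symm T1 T2 T3 T
  omega

end PartE4

/-! ### Part F: the Finsupp layer -/

section PartF

lemma aCount_size {T₁ T₂ T : TreeClass} (h : aCount T₁ T₂ T ≠ 0) :
    sizeT T = sizeT T₁ + sizeT T₂ := by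
  rw [aCount_eq_countP] at h
  exact size_of_phiA_count h

lemma graftBasis_apply (T₁ T₂ T : TreeClass) :
    graftBasis T₁ T₂ T = (aCount T₁ T₂ T : ℚ) := by
  unfold graftBasis
  rw [Finsupp.finset_sum_apply]
  have hpt : ∀ T' ∈ treeCand (sizeT T₁ + sizeT T₂),
      ((aCount T₁ T₂ T' : ℚ) • tau T') T = if T' = T then (aCount T₁ T₂ T' : ℚ) else 0 := by
    intro T' _
    rw [Finsupp.smul_apply, tau, Finsupp.single_apply]
    by_cases h : T' = T <;> simp [h]
  rw [Finset.sum_congr rfl hpt, Finset.sum_ite_eq']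
  by_cases hmem : T ∈ treeCand (sizeT T₁ + sizeT T₂)
  · rw [if_pos hmem]
  · rw [if_neg hmem]
    by_cases hz : aCount T₁ T₂ T = 0
    · rw [hz]; simp
    · exact absurd (treeCand_complete (by rw [aCount_size hz]; omega)) hmem

/-- the grafting product as a bilinear map -/
noncomputable def graftL : nT →ₗ[ℚ] nT →ₗ[ℚ] nT :=
  Finsupp.lsum ℚ fun T₁ => LinearMap.toSpanSingleton ℚ (nT →ₗ[ℚ] nT)
    (Finsupp.lsum ℚ fun T₂ => LinearMap.toSpanSingleton ℚ nT (graftBasis T₁ T₂))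

lemma graft_eq_graftL (x y : nT) : graft x y = graftL x y := by
  unfold graft graftL
  rw [Finsupp.lsum_apply, LinearMap.finsupp_sum_apply]
  apply Finsupp.sum_congr
  intro T₁ _
  rw [LinearMap.toSpanSingleton_apply, LinearMap.smul_apply, Finsupp.lsum_apply,
    Finsupp.smul_sum]
  apply Finsupp.sum_congr
  intro T₂ _
  rw [LinearMap.toSpanSingleton_apply, smul_smul]

lemma graft_add_left (x y z : nT) : graft (x + y) z = graft x z + graft y z := by
  rw [graft_eq_graftL, graft_eq_graftL, graft_eq_graftL, map_add, LinearMap.add_apply]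

lemma graft_add_right (x y z : nT) : graft x (y + z) = graft x y + graft x z := by
  rw [graft_eq_graftL, graft_eq_graftL, graft_eq_graftL, map_add]

lemma graft_smul_left (a : ℚ) (x y : nT) : graft (a • x) y = a • graft x y := by
  rw [graft_eq_graftL, graft_eq_graftL, map_smul, LinearMap.smul_apply]

lemma graft_smul_right (a : ℚ) (x y : nT) : graft x (a • y) = a • graft x y := by
  rw [graft_eq_graftL, graft_eq_graftL, map_smul]

lemma graft_zero_left (y : nT) : graft 0 y = 0 := by
  rw [graft_eq_graftL, map_zero, LinearMap.zero_apply]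

lemma graft_zero_right (x : nT) : graft x 0 = 0 := by
  rw [graft_eq_graftL, map_zero]

lemma graft_sub_left (x y z : nT) : graft (x - y) z = graft x z - graft y z := by
  rw [graft_eq_graftL, graft_eq_graftL, graft_eq_graftL, map_sub, LinearMap.sub_apply]

lemma graft_sub_right (x y z : nT) : graft x (y - z) = graft x y - graft x z := by
  rw [graft_eq_graftL, graft_eq_graftL, graft_eq_graftL, map_sub]

lemma graft_tau (T₁ T₂ : TreeClass) : graft (tau T₁) (tau T₂) = graftBasis T₁ T₂ := by
  unfold graft tau
  rw [Finsupp.sum_single_index (by simp)]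
  rw [Finsupp.sum_single_index (by simp)]
  simp

lemma single_eq_smul_tau (a : TreeClass) (b : ℚ) :
    (Finsupp.single a b : nT) = b • tau a := by
  rw [tau, Finsupp.smul_single', mul_one]

lemma graft_graftBasis_left (T1 T2 T3 : TreeClass) :
    graft (graftBasis T1 T2) (tau T3)
      = ∑ S ∈ treeCand (sizeT T1 + sizeT T2), (aCount T1 T2 S : ℚ) • graftBasis S T3 := by
  rw [graft_eq_graftL,
    show graftBasis T1 T2
      = ∑ T ∈ treeCand (sizeT T1 + sizeT T2), (aCount T1 T2 T : ℚ) • tau T from rfl]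
  rw [map_sum, LinearMap.sum_apply]
  apply Finset.sum_congr rfl
  intro S _
  rw [map_smul, LinearMap.smul_apply, ← graft_eq_graftL, graft_tau]

lemma graft_graftBasis_right (T1 T2 T3 : TreeClass) :
    graft (tau T1) (graftBasis T2 T3)
      = ∑ S ∈ treeCand (sizeT T2 + sizeT T3), (aCount T2 T3 S : ℚ) • graftBasis T1 S := by
  rw [graft_eq_graftL,
    show graftBasis T2 T3
      = ∑ T ∈ treeCand (sizeT T2 + sizeT T3), (aCount T2 T3 T : ℚ) • tau T from rfl]
  rw [map_sum]
  apply Finset.sum_congr rfl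
  intro S _
  rw [map_smul, ← graft_eq_graftL, graft_tau]

lemma sum_smul_graftBasis_apply (fin : Finset TreeClass) (c : TreeClass → ℚ)
    (u v : TreeClass → TreeClass) (T : TreeClass) :
    (∑ S ∈ fin, c S • graftBasis (u S) (v S)) T
      = ∑ S ∈ fin, c S * (aCount (u S) (v S) T : ℚ) := by
  rw [Finsupp.finset_sum_apply]
  apply Finset.sum_congr rfl
  intro S _
  rw [Finsupp.smul_apply, graftBasis_apply]
  rfl

lemma preLie_basis (T1 T2 T3 : TreeClass) :
    graft (graft (tau T1) (tau T2)) (tau T3) - graft (tau T1) (graft (tau T2) (tau T3))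
      = graft (graft (tau T2) (tau T1)) (tau T3) - graft (tau T2) (graft (tau T1) (tau T3))
    := by
  rw [graft_tau T1 T2, graft_tau T2 T3, graft_tau T2 T1, graft_tau T1 T3,
    graft_graftBasis_left, graft_graftBasis_right, graft_graftBasis_left,
    graft_graftBasis_right]
  ext T
  rw [Finsupp.sub_apply, Finsupp.sub_apply, sum_smul_graftBasis_apply,
    sum_smul_graftBasis_apply, sum_smul_graftBasis_apply, sum_smul_graftBasis_apply]
  have key := key_nat T1 T2 T3 T
  have c1 : (∑ S ∈ treeCand (sizeT T1 + sizeT T2),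
        (aCount T1 T2 S : ℚ) * (aCount S T3 T : ℚ))
      = ((∑ S ∈ treeCand (sizeT T1 + sizeT T2), (aCount S T3 T) * (aCount T1 T2 S) : ℕ) : ℚ)
    := by
    push_cast
    apply Finset.sum_congr rfl
    intro S _
    ring
  have c2 : (∑ S ∈ treeCand (sizeT T2 + sizeT T3),
        (aCount T2 T3 S : ℚ) * (aCount T1 S T : ℚ))
      = ((∑ S ∈ treeCand (sizeT T2 + sizeT T3), (aCount T1 S T) * (aCount T2 T3 S) : ℕ) : ℚ)
    := by
    push_cast
    apply Finset.sum_congr rfl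
    intro S _
    ring
  have c3 : (∑ S ∈ treeCand (sizeT T2 + sizeT T1),
        (aCount T2 T1 S : ℚ) * (aCount S T3 T : ℚ))
      = ((∑ S ∈ treeCand (sizeT T2 + sizeT T1), (aCount S T3 T) * (aCount T2 T1 S) : ℕ) : ℚ)
    := by
    push_cast
    apply Finset.sum_congr rfl
    intro S _
    ring
  have c4 : (∑ S ∈ treeCand (sizeT T1 + sizeT T3),
        (aCount T1 T3 S : ℚ) * (aCount T2 S T : ℚ))
      = ((∑ S ∈ treeCand (sizeT T1 + sizeT T3), (aCount T2 S T) * (aCount T1 T3 S) : ℕ) : ℚ)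
    := by
    push_cast
    apply Finset.sum_congr rfl
    intro S _
    ring
  rw [c1, c2, c3, c4]
  have hcast := congrArg (fun n : ℕ => (n : ℚ)) key
  simp only [Nat.cast_add] at hcast
  linarith

lemma preLie (x y z : nT) :
    graft (graft x y) z - graft x (graft y z) = graft (graft y x) z - graft y (graft x z)
    := by
  induction x using Finsupp.induction_linear with
  | zero => simp [graft_zero_left, graft_zero_right]
  | add f g hf hg =>
      simp only [graft_add_left, graft_add_right]
      rw [← sub_add_sub_comm, ← sub_add_sub_comm, hf, hg]
  | single a₁ b₁ =>
      induction y using Finsupp.induction_linear with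
      | zero => simp [graft_zero_left, graft_zero_right]
      | add f g hf hg =>
          simp only [graft_add_left, graft_add_right]
          rw [← sub_add_sub_comm, ← sub_add_sub_comm, hf, hg]
      | single a₂ b₂ =>
          induction z using Finsupp.induction_linear with
          | zero => simp [graft_zero_left, graft_zero_right]
          | add f g hf hg =>
              simp only [graft_add_right]
              rw [← sub_add_sub_comm, ← sub_add_sub_comm, hf, hg]
          | single a₃ b₃ =>
              rw [single_eq_smul_tau a₁ b₁, single_eq_smul_tau a₂ b₂,
                single_eq_smul_tau a₃ b₃]
              simp only [graft_smul_left, graft_smul_right, smul_smul]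
              rw [show b₃ * (b₂ * b₁) = b₁ * b₂ * b₃ from by ring,
                show b₃ * b₂ * b₁ = b₁ * b₂ * b₃ from by ring,
                show b₃ * (b₁ * b₂) = b₁ * b₂ * b₃ from by ring,
                show b₃ * b₁ * b₂ = b₁ * b₂ * b₃ from by ring]
              rw [← smul_sub, ← smul_sub]
              exact congrArg (fun v => (b₁ * b₂ * b₃) • v) (preLie_basis a₁ a₂ a₃)

end PartF

/-- The grafting product on `n_T` satisfies the pre-Lie identity
(for all rooted trees, hence by bilinearity for all elements of `n_T`), and
consequently the Connes–Kreimer bracket `[x,y] = x*y − y*x` is bilinear,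
antisymmetric and satisfies the Jacobi identity, making `n_T` a Lie algebra
over ℚ. -/
theorem grafting_preLie_and_Lie :
    -- the pre-Lie identity
    (∀ x y z : nT,
      graft (graft x y) z - graft x (graft y z)
        = graft (graft y x) z - graft y (graft x z)) ∧
    -- the bracket is bilinear
    (∀ x y z : nT, ckBracket (x + y) z = ckBracket x z + ckBracket y z) ∧
    (∀ x y z : nT, ckBracket x (y + z) = ckBracket x y + ckBracket x z) ∧
    (∀ (a : ℚ) (x y : nT), ckBracket (a • x) y = a • ckBracket x y) ∧
    (∀ (a : ℚ) (x y : nT), ckBracket x (a • y) = a • ckBracket x y) ∧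
    -- antisymmetric
    (∀ x y : nT, ckBracket y x = - ckBracket x y) ∧
    -- and satisfies the Jacobi identity
    (∀ x y z : nT,
      ckBracket x (ckBracket y z) + ckBracket y (ckBracket z x)
        + ckBracket z (ckBracket x y) = 0) := by
  refine ⟨preLie, ?_, ?_, ?_, ?_, ?_, ?_⟩
  · intro x y z
    simp only [ckBracket, graft_add_left, graft_add_right]
    abel
  · intro x y z
    simp only [ckBracket, graft_add_left, graft_add_right]
    abel
  · intro a x y
    simp only [ckBracket, graft_smul_left, graft_smul_right, smul_sub]
  · intro a x y
    simp only [ckBracket, graft_smul_left, graft_smul_right, smul_sub]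
  · intro x y
    simp only [ckBracket]
    abel
  · intro x y z
    have expand : ckBracket x (ckBracket y z) + ckBracket y (ckBracket z x)
          + ckBracket z (ckBracket x y)
        = -((graft (graft y z) x - graft y (graft z x))
              - (graft (graft z y) x - graft z (graft y x)))
          + (-((graft (graft z x) y - graft z (graft x y))
              - (graft (graft x z) y - graft x (graft z y)))
          + (-((graft (graft x y) z - graft x (graft y z))
              - (graft (graft y x) z - graft y (graft x z))))) := by
      simp only [ckBracket, graft_sub_left, graft_sub_right]
      abel
    rw [expand, sub_eq_zero_of_eq (preLie y z x), sub_eq_zero_of_eq (preLie z x y),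
      sub_eq_zero_of_eq (preLie x y z)]
    simp

end CK
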